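/- arXiv:1006.0478 — 9 statements merged into one kernel-verified Lean document; each statement's English description precedes it below -/
import Mathlib

section
/- Let R be a commutative ring, D : R → R a derivation, F ∈ R, and let A_{s,l} be the associated double sequence. Then for every integer s ≥ 2 and every l ≥ 0, one has s · A_{s,l} = Σ_{r=1}^{l+1-s} C(l,r) · A_{1,r} · A_{s-1,l-r}, where C(l,r) denotes the binomial coefficient and s · A_{s,l} denotes the s-fold sum of A_{s,l}. -/
/-- Let `R` be a commutative ring, `D : R → R` a derivation, `F ∈ R`, and
`A` the associated double sequence (`A s l = 0` unless `s ≤ l`, `A 0 0 = 1`,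
`A s (l+1) = F * (D (A s l) + A (s-1) l)` with `A (-1) l = 0`).  Then for every `s ≥ 2` and
every `l ≥ 0`,
`s • A s l = ∑_{r=1}^{l+1-s} C(l,r) • (A 1 r * A (s-1) (l-r))`. -/
theorem statement0 {R : Type*} [CommRing R] (D : R → R)
    (hD_add : ∀ a b : R, D (a + b) = D a + D b)
    (hD_mul : ∀ a b : R, D (a * b) = D a * b + a * D b)
    (F : R) (A : ℕ → ℕ → R)
    (hA00 : A 0 0 = 1)
    (hAvanish : ∀ s l : ℕ, l < s → A s l = 0)
    (hArec0 : ∀ l : ℕ, A 0 (l + 1) = F * D (A 0 l))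
    (hArec : ∀ s l : ℕ, A (s + 1) (l + 1) = F * (D (A (s + 1) l) + A s l))
    (s l : ℕ) (hs : 2 ≤ s) :
    s • A s l =
      ∑ r ∈ Finset.Icc 1 (l + 1 - s), (l.choose r) • (A 1 r * A (s - 1) (l - r)) := by
  have hD0 : D 0 = 0 := by
    have h := hD_add 0 0
    rw [add_zero] at h
    exact left_eq_add.mp h
  have hD1 : D 1 = 0 := by
    have h := hD_mul 1 1
    simp only [mul_one, one_mul] at h
    exact left_eq_add.mp h
  have hDnat : ∀ n : ℕ, D (n : R) = 0 := by
    intro n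
    induction n with
    | zero => simpa using hD0
    | succ k ih => push_cast; rw [hD_add, ih, hD1, add_zero]
  have hDc : ∀ (n : ℕ) (x : R), D ((n : R) * x) = (n : R) * D x := by
    intro n x
    rw [hD_mul, hDnat, zero_mul, zero_add]
  have hA0 : ∀ k : ℕ, A 0 (k + 1) = 0 := by
    intro k
    induction k with
    | zero => rw [hArec0, hA00, hD1, mul_zero]
    | succ k ih => rw [hArec0, ih, hD0, mul_zero]
  have hDsum : ∀ (n : ℕ) (f : ℕ → R),
      D (∑ r ∈ Finset.range n, f r) = ∑ r ∈ Finset.range n, D (f r) := by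
    intro n f
    induction n with
    | zero => simpa using hD0
    | succ k ih => rw [Finset.sum_range_succ, hD_add, ih, Finset.sum_range_succ]
  have key : ∀ t l : ℕ, ((t + 1 : ℕ) : R) * A (t + 1) l =
      ∑ r ∈ Finset.range (l - t),
        ((l.choose (r + 1) : R)) * (A 1 (r + 1) * A t (l - (r + 1))) := by
    intro t
    induction t with
    | zero =>
      intro l
      cases l with
      | zero => simp [hAvanish 1 0 (by omega)]
      | succ l =>
        simp only [Nat.sub_zero]
        rw [Finset.sum_eq_single_of_mem l (Finset.self_mem_range_succ l)]
        · rw [Nat.choose_self, show l + 1 - (l + 1) = 0 from by omega, hA00]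
          push_cast; ring
        · intro b hb hbl
          rw [Finset.mem_range] at hb
          rw [show l + 1 - (b + 1) = (l - b - 1) + 1 from by omega, hA0]
          ring
    | succ t iht =>
      intro l
      induction l with
      | zero =>
        simp [hAvanish (t + 2) 0 (by omega)]
      | succ l ihl =>
        by_cases hlt : l < t + 1
        · rw [show l + 1 - (t + 1) = 0 from by omega]
          simp [hAvanish (t + 1 + 1) (l + 1) (by omega)]
        · push_neg at hlt
          set n := l - (t + 1) with hn
          rw [show l + 1 - (t + 1) = n + 1 from by omega]
          have hsum : ∀ r ∈ Finset.range (n + 1),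
              ((l + 1).choose (r + 1) : R) * (A 1 (r + 1) * A (t + 1) (l + 1 - (r + 1)))
              = F * ((l.choose r : R) * (D (A 1 r) * A (t + 1) (l - r)))
                + F * ((l.choose r : R) * (A 0 r * A (t + 1) (l - r)))
                + F * ((l.choose (r + 1) : R) * (A 1 (r + 1) * D (A (t + 1) (l - (r + 1)))))
                + F * ((l.choose (r + 1) : R) * (A 1 (r + 1) * A t (l - (r + 1)))) := by
            intro r hr
            rw [Finset.mem_range] at hr
            have hB : A (t + 1) (l - r)
                = F * (D (A (t + 1) (l - (r + 1))) + A t (l - (r + 1))) := by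
              rw [show l - r = (l - (r + 1)) + 1 from by omega]
              exact hArec t _
            have hA1 : A 1 (r + 1) = F * (D (A 1 r) + A 0 r) := hArec 0 r
            rw [show l + 1 - (r + 1) = l - r from by omega, Nat.choose_succ_succ, hB, hA1]
            push_cast; ring
          rw [Finset.sum_congr rfl hsum, Finset.sum_add_distrib, Finset.sum_add_distrib,
            Finset.sum_add_distrib]
          have hS1 : ∑ r ∈ Finset.range (n + 1),
                F * ((l.choose r : R) * (D (A 1 r) * A (t + 1) (l - r)))
              = ∑ r ∈ Finset.range n,
                F * ((l.choose (r + 1) : R) * (D (A 1 (r + 1)) * A (t + 1) (l - (r + 1)))) := by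
            rw [Finset.sum_range_succ']
            rw [hAvanish 1 0 (by omega), hD0]
            simp
          have hS2 : ∑ r ∈ Finset.range (n + 1),
                F * ((l.choose r : R) * (A 0 r * A (t + 1) (l - r)))
              = F * A (t + 1) l := by
            rw [Finset.sum_eq_single_of_mem 0 (Finset.mem_range.mpr (by omega))]
            · simp [hA00]
            · intro b hb hb0
              rw [show b = (b - 1) + 1 from by omega, hA0]
              ring
          have hS3 : ∑ r ∈ Finset.range (n + 1),
                F * ((l.choose (r + 1) : R) * (A 1 (r + 1) * D (A (t + 1) (l - (r + 1)))))
              = ∑ r ∈ Finset.range n,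
                F * ((l.choose (r + 1) : R) * (A 1 (r + 1) * D (A (t + 1) (l - (r + 1))))) := by
            rw [Finset.sum_range_succ, hAvanish (t + 1) (l - (n + 1)) (by omega), hD0]
            simp
          have hS4 : ∑ r ∈ Finset.range (n + 1),
                F * ((l.choose (r + 1) : R) * (A 1 (r + 1) * A t (l - (r + 1))))
              = F * (((t + 1 : ℕ) : R) * A (t + 1) l) := by
            rw [← Finset.mul_sum]
            have h4 := iht l
            rw [show l - t = n + 1 from by omega] at h4
            rw [← h4]
          rw [hS1, hS2, hS3, hS4]
          have hS13 : (∑ r ∈ Finset.range n,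
                F * ((l.choose (r + 1) : R) * (D (A 1 (r + 1)) * A (t + 1) (l - (r + 1)))))
              + (∑ r ∈ Finset.range n,
                F * ((l.choose (r + 1) : R) * (A 1 (r + 1) * D (A (t + 1) (l - (r + 1))))))
              = F * (((t + 1 + 1 : ℕ) : R) * D (A (t + 1 + 1) l)) := by
            rw [← Finset.sum_add_distrib]
            have hterm : ∀ r ∈ Finset.range n,
                F * ((l.choose (r + 1) : R) * (D (A 1 (r + 1)) * A (t + 1) (l - (r + 1))))
                + F * ((l.choose (r + 1) : R) * (A 1 (r + 1) * D (A (t + 1) (l - (r + 1)))))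
                = F * D ((l.choose (r + 1) : R) * (A 1 (r + 1) * A (t + 1) (l - (r + 1)))) := by
              intro r hr
              rw [hDc, hD_mul]
              ring
            rw [Finset.sum_congr rfl hterm, ← Finset.mul_sum, ← hDsum, ← ihl, hDc]
          rw [hArec (t + 1) l]
          linear_combination (norm := (push_cast; ring)) -hS13
  obtain ⟨t, rfl⟩ : ∃ t, s = t + 1 := ⟨s - 1, by omega⟩
  simp only [nsmul_eq_mul, Nat.add_sub_cancel]
  rw [← Finset.Ico_add_one_right_eq_Icc, Finset.sum_Ico_eq_sum_range,
    show l + 1 - (t + 1) + 1 - 1 = l - t from by omega, key t l]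
  exact Finset.sum_congr rfl fun i _ => by rw [add_comm 1 i]
end

section
/- Let R be a commutative ring, D : R → R a derivation, F ∈ R, and let A_{s,l} be the associated double sequence. Let k ≥ 2 and let s = s₁ + ⋯ + s_k with each s_i ≥ 1 (so s ≥ 2). Then for every l ≥ 0, (s!/(s₁!⋯s_k!)) · A_{s,l} = Σ (l!/(l₁!⋯l_k!)) · A_{s₁,l₁} ⋯ A_{s_k,l_k}, where the sum runs over all tuples (l₁,…,l_k) of integers with l₁ + ⋯ + l_k = l and each l_i ≥ 1, and where the multinomial coefficients s!/(s₁!⋯s_k!) and l!/(l₁!⋯l_k!) are the usual integer multinomial coefficients acting by repeated addition. -/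
open Finset

/-- Reindexing sums over `antidiagonalTuple (k+1) n`. -/
lemma sum_adT_succ {M : Type*} [AddCommMonoid M] (k n : ℕ) (f : (Fin (k + 1) → ℕ) → M) :
    ∑ g ∈ Finset.Nat.antidiagonalTuple (k + 1) n, f g
      = ∑ p ∈ Finset.HasAntidiagonal.antidiagonal n, ∑ g ∈ Finset.Nat.antidiagonalTuple k p.2,
          f (Fin.cons p.1 g) := by
  rw [Finset.sum_sigma']
  refine Finset.sum_nbij' (fun g => ⟨(g 0, ∑ i, Fin.tail g i), Fin.tail g⟩)
    (fun x => Fin.cons x.1.1 x.2) ?_ ?_ ?_ ?_ ?_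
  · intro g hg
    rw [Finset.Nat.mem_antidiagonalTuple] at hg
    simp only [Finset.mem_sigma, Finset.HasAntidiagonal.mem_antidiagonal, Finset.Nat.mem_antidiagonalTuple]
    exact ⟨by rw [← hg, Fin.sum_univ_succ]; rfl, trivial⟩
  · intro x hx
    simp only [Finset.mem_sigma, Finset.HasAntidiagonal.mem_antidiagonal,
      Finset.Nat.mem_antidiagonalTuple] at hx ⊢
    rw [Fin.sum_univ_succ]
    simp only [Fin.cons_zero, Fin.cons_succ]
    rw [hx.2, hx.1]
  · intro g _
    exact Fin.cons_self_tail g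
  · intro x hx
    simp only [Finset.mem_sigma, Finset.HasAntidiagonal.mem_antidiagonal,
      Finset.Nat.mem_antidiagonalTuple] at hx
    simp only [Fin.cons_zero, Fin.tail_cons]
    rw [hx.2]
  · intro g _
    rw [Fin.cons_self_tail g]

section

variable {R : Type*} [CommRing R] (F : R) (A : ℕ → ℕ → R) (D : R →+ R)

/-- Key binomial case, over the full antidiagonal. -/
lemma keyL2
    (hD_mul : ∀ a b : R, D (a * b) = D a * b + a * D b)
    (hA00 : A 0 0 = 1)
    (hAvanish : ∀ s l : ℕ, l < s → A s l = 0)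
    (hA0succ : ∀ l : ℕ, A 0 (l + 1) = 0)
    (hArec : ∀ s l : ℕ, A (s + 1) (l + 1) = F * (D (A (s + 1) l) + A s l)) :
    ∀ l s₁ s₂ : ℕ, (s₁ + s₂).choose s₁ • A (s₁ + s₂) l
      = ∑ p ∈ Finset.HasAntidiagonal.antidiagonal l, l.choose p.1 • (A s₁ p.1 * A s₂ p.2) := by
  intro l
  induction l with
  | zero =>
    intro s₁ s₂
    simp only [Finset.Nat.antidiagonal_zero, Finset.sum_singleton, Nat.choose_zero_right,
      one_smul, Nat.choose_self]
    rcases Nat.eq_zero_or_pos s₁ with h1 | h1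
    · rcases Nat.eq_zero_or_pos s₂ with h2 | h2
      · subst h1; subst h2; simp [hA00]
      · subst h1
        rw [hAvanish s₂ 0 h2, hAvanish (0 + s₂) 0 (by omega), mul_zero, smul_zero]
    · rw [hAvanish s₁ 0 h1, hAvanish (s₁ + s₂) 0 (by omega), zero_mul, smul_zero]
  | succ l ih =>
    intro s₁ s₂
    rcases Nat.eq_zero_or_pos s₁ with h1 | h1
    · subst h1
      rw [Finset.Nat.sum_antidiagonal_succ]
      have hz : ∑ p ∈ Finset.HasAntidiagonal.antidiagonal l,
          (l + 1).choose (p.1 + 1) • (A 0 (p.1 + 1) * A s₂ p.2) = 0 := by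
        apply Finset.sum_eq_zero
        intro p _
        rw [hA0succ, zero_mul, smul_zero]
      rw [hz, add_zero, hA00, one_mul, Nat.choose_zero_right, one_smul, zero_add,
        Nat.choose_zero_right, one_smul]
    · rcases Nat.eq_zero_or_pos s₂ with h2 | h2
      · subst h2
        rw [Finset.Nat.sum_antidiagonal_succ']
        have hz : ∑ p ∈ Finset.HasAntidiagonal.antidiagonal l,
            (l + 1).choose p.1 • (A s₁ p.1 * A 0 (p.2 + 1)) = 0 := by
          apply Finset.sum_eq_zero
          intro p _
          rw [hA0succ, mul_zero, smul_zero]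
        rw [hz, add_zero, hA00, mul_one, Nat.choose_self, one_smul, add_zero,
          Nat.choose_self, one_smul]
      · -- main case
        obtain ⟨u, rfl⟩ : ∃ u, s₁ = u + 1 := ⟨s₁ - 1, by omega⟩
        obtain ⟨v, rfl⟩ : ∃ v, s₂ = v + 1 := ⟨s₂ - 1, by omega⟩
        -- RHS rewriting
        have step1 : ∑ p ∈ Finset.HasAntidiagonal.antidiagonal (l + 1),
              (l + 1).choose p.1 • (A (u + 1) p.1 * A (v + 1) p.2)
            = ∑ p ∈ Finset.HasAntidiagonal.antidiagonal l,
              (l + 1).choose (p.1 + 1) • (A (u + 1) (p.1 + 1) * A (v + 1) p.2) := by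
          rw [Finset.Nat.sum_antidiagonal_succ]
          rw [hAvanish (u + 1) 0 (by omega), zero_mul, smul_zero, zero_add]
        have step2 : ∑ p ∈ Finset.HasAntidiagonal.antidiagonal l,
              l.choose (p.1 + 1) • (A (u + 1) (p.1 + 1) * A (v + 1) p.2)
            = ∑ p ∈ Finset.HasAntidiagonal.antidiagonal l,
              l.choose p.1 • (A (u + 1) p.1 * A (v + 1) (p.2 + 1)) := by
          have e1 : ∑ p ∈ Finset.HasAntidiagonal.antidiagonal (l + 1),
                l.choose p.1 • (A (u + 1) p.1 * A (v + 1) p.2)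
              = ∑ p ∈ Finset.HasAntidiagonal.antidiagonal l,
                l.choose (p.1 + 1) • (A (u + 1) (p.1 + 1) * A (v + 1) p.2) := by
            rw [Finset.Nat.sum_antidiagonal_succ]
            rw [hAvanish (u + 1) 0 (by omega), zero_mul, smul_zero, zero_add]
          have e2 : ∑ p ∈ Finset.HasAntidiagonal.antidiagonal (l + 1),
                l.choose p.1 • (A (u + 1) p.1 * A (v + 1) p.2)
              = ∑ p ∈ Finset.HasAntidiagonal.antidiagonal l,
                l.choose p.1 • (A (u + 1) p.1 * A (v + 1) (p.2 + 1)) := by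
            rw [Finset.Nat.sum_antidiagonal_succ']
            rw [Nat.choose_succ_self, zero_smul, zero_add]
          rw [← e1, e2]
        calc (u + 1 + (v + 1)).choose (u + 1) • A (u + 1 + (v + 1)) (l + 1)
            = (u + 1 + (v + 1)).choose (u + 1) •
                (F * (D (A (u + v + 1 + 1) l) + A (u + v + 1) l)) := by
              rw [show u + 1 + (v + 1) = u + v + 1 + 1 by ring, hArec]
          _ = (u + 1 + (v + 1)).choose (u + 1) • (F * D (A (u + v + 1 + 1) l))
              + ((u + v + 1).choose u + (u + v + 1).choose (u + 1)) •
                (F * A (u + v + 1) l) := by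
              rw [mul_add, smul_add]
              congr 1
              congr 1
              rw [show u + 1 + (v + 1) = (u + v + 1) + 1 by ring]
              rw [Nat.choose_succ_succ]
          _ = F * D ((u + 1 + (v + 1)).choose (u + 1) • A (u + 1 + (v + 1)) l)
              + (F * ((u + (v + 1)).choose u • A (u + (v + 1)) l)
                 + F * ((u + 1 + v).choose (u + 1) • A (u + 1 + v) l)) := by
              rw [map_nsmul, mul_smul_comm, add_smul]
              rw [show u + v + 1 + 1 = u + 1 + (v + 1) by ring]
              rw [show u + v + 1 = u + (v + 1) by ring]
              congr 2
              · rw [mul_smul_comm]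
              · rw [mul_smul_comm]
                rw [show u + (v + 1) = u + 1 + v by ring]
          _ = F * D (∑ p ∈ Finset.HasAntidiagonal.antidiagonal l,
                  l.choose p.1 • (A (u + 1) p.1 * A (v + 1) p.2))
              + (F * ∑ p ∈ Finset.HasAntidiagonal.antidiagonal l,
                  l.choose p.1 • (A u p.1 * A (v + 1) p.2)
                + F * ∑ p ∈ Finset.HasAntidiagonal.antidiagonal l,
                  l.choose p.1 • (A (u + 1) p.1 * A v p.2)) := by
              rw [ih (u + 1) (v + 1), ih u (v + 1), ih (u + 1) v]
          _ = ∑ p ∈ Finset.HasAntidiagonal.antidiagonal l,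
                ((l.choose p.1 • (F * (D (A (u + 1) p.1) * A (v + 1) p.2
                    + A (u + 1) p.1 * D (A (v + 1) p.2))))
                 + (l.choose p.1 • (F * (A u p.1 * A (v + 1) p.2))
                    + l.choose p.1 • (F * (A (u + 1) p.1 * A v p.2)))) := by
              rw [map_sum, Finset.mul_sum, Finset.mul_sum, Finset.mul_sum,
                Finset.sum_add_distrib, Finset.sum_add_distrib]
              congr 1
              · apply Finset.sum_congr rfl
                intro p _
                rw [map_nsmul, hD_mul, mul_smul_comm]
              · congr 1 <;> (apply Finset.sum_congr rfl; intro p _; rw [mul_smul_comm])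
          _ = ∑ p ∈ Finset.HasAntidiagonal.antidiagonal l,
                (l.choose p.1 • (A (u + 1) (p.1 + 1) * A (v + 1) p.2)
                 + l.choose p.1 • (A (u + 1) p.1 * A (v + 1) (p.2 + 1))) := by
              apply Finset.sum_congr rfl
              intro p _
              rw [hArec u p.1, hArec v p.2, ← smul_add, ← smul_add, ← smul_add]
              congr 1
              ring
          _ = ∑ p ∈ Finset.HasAntidiagonal.antidiagonal (l + 1),
                (l + 1).choose p.1 • (A (u + 1) p.1 * A (v + 1) p.2) := by
              rw [step1]
              rw [Finset.sum_add_distrib, ← step2, ← Finset.sum_add_distrib]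
              apply Finset.sum_congr rfl
              intro p _
              rw [← add_smul, ← Nat.choose_succ_succ]

end

lemma multinomial_map' {α β : Type*} (s : Finset α) (e : α ↪ β) (f : β → ℕ) :
    Nat.multinomial (s.map e) f = Nat.multinomial s (f ∘ e) := by
  unfold Nat.multinomial
  rw [Finset.sum_map, Finset.prod_map]
  rfl

lemma multinomial_univ_succ' (k : ℕ) (f : Fin (k + 1) → ℕ) :
    Nat.multinomial Finset.univ f
      = (f 0 + ∑ i : Fin k, f i.succ).choose (f 0)
        * Nat.multinomial Finset.univ (fun i : Fin k => f i.succ) := by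
  rw [Fin.univ_succ, Nat.multinomial_cons]
  simp only [Finset.sum_map, Function.Embedding.coeFn_mk]
  congr 1
  rw [multinomial_map']
  exact Nat.multinomial_congr (fun i _ => rfl)

section

variable {R : Type*} [CommRing R] (F : R) (A : ℕ → ℕ → R) (D : R →+ R)

set_option maxHeartbeats 1000000 in
lemma keyLk
    (hD_mul : ∀ a b : R, D (a * b) = D a * b + a * D b)
    (hA00 : A 0 0 = 1)
    (hAvanish : ∀ s l : ℕ, l < s → A s l = 0)
    (hA0succ : ∀ l : ℕ, A 0 (l + 1) = 0)
    (hArec : ∀ s l : ℕ, A (s + 1) (l + 1) = F * (D (A (s + 1) l) + A s l)) :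
    ∀ (k : ℕ) (sv : Fin k → ℕ) (l : ℕ),
      Nat.multinomial Finset.univ sv • A (∑ i, sv i) l
        = ∑ g ∈ Finset.Nat.antidiagonalTuple k l,
            Nat.multinomial Finset.univ g • ∏ i, A (sv i) (g i) := by
  intro k
  induction k with
  | zero =>
    intro sv l
    have hm : ∀ f : Fin 0 → ℕ, Nat.multinomial Finset.univ f = 1 := by
      intro f; simp [Nat.multinomial]
    cases l with
    | zero =>
      rw [Finset.Nat.antidiagonalTuple_zero_zero, Finset.sum_singleton, hm, hm]
      simp [hA00]
    | succ l =>
      rw [Finset.Nat.antidiagonalTuple_zero_succ, Finset.sum_empty, hm]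
      simp [hA0succ]
  | succ k ih =>
    intro sv l
    calc Nat.multinomial Finset.univ sv • A (∑ i, sv i) l
        = Nat.multinomial Finset.univ (fun i : Fin k => sv i.succ) •
            ((sv 0 + ∑ i : Fin k, sv i.succ).choose (sv 0) •
              A (sv 0 + ∑ i : Fin k, sv i.succ) l) := by
          rw [multinomial_univ_succ', Fin.sum_univ_succ, smul_smul, Nat.mul_comm]
      _ = Nat.multinomial Finset.univ (fun i : Fin k => sv i.succ) •
            ∑ p ∈ Finset.HasAntidiagonal.antidiagonal l, l.choose p.1 •
              (A (sv 0) p.1 * A (∑ i : Fin k, sv i.succ) p.2) := by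
          rw [keyL2 F A D hD_mul hA00 hAvanish hA0succ hArec]
      _ = ∑ p ∈ Finset.HasAntidiagonal.antidiagonal l, l.choose p.1 •
            (A (sv 0) p.1 * (Nat.multinomial Finset.univ (fun i : Fin k => sv i.succ)
              • A (∑ i : Fin k, sv i.succ) p.2)) := by
          rw [Finset.smul_sum]
          apply Finset.sum_congr rfl
          intro p _
          rw [smul_comm, mul_smul_comm]
      _ = ∑ p ∈ Finset.HasAntidiagonal.antidiagonal l, l.choose p.1 •
            (A (sv 0) p.1 * ∑ g ∈ Finset.Nat.antidiagonalTuple k p.2,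
              Nat.multinomial Finset.univ g • ∏ i, A (sv i.succ) (g i)) := by
          apply Finset.sum_congr rfl
          intro p _
          rw [ih (fun i => sv i.succ) p.2]
      _ = ∑ p ∈ Finset.HasAntidiagonal.antidiagonal l, ∑ g ∈ Finset.Nat.antidiagonalTuple k p.2,
            Nat.multinomial Finset.univ (Fin.cons p.1 g : Fin (k + 1) → ℕ) •
              ∏ i, A (sv i) ((Fin.cons p.1 g : Fin (k + 1) → ℕ) i) := by
          apply Finset.sum_congr rfl
          intro p hp
          rw [Finset.mul_sum, Finset.smul_sum]
          apply Finset.sum_congr rfl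
          intro g hg
          rw [Finset.Nat.mem_antidiagonalTuple] at hg
          rw [Finset.HasAntidiagonal.mem_antidiagonal] at hp
          have hgm : Nat.multinomial Finset.univ (Fin.cons p.1 g : Fin (k + 1) → ℕ)
              = l.choose p.1 * Nat.multinomial Finset.univ g := by
            rw [multinomial_univ_succ' k (Fin.cons p.1 g)]
            simp only [Fin.cons_zero, Fin.cons_succ]
            rw [hg, hp]
          have hpr : (∏ i, A (sv i) ((Fin.cons p.1 g : Fin (k + 1) → ℕ) i))
              = A (sv 0) p.1 * ∏ i : Fin k, A (sv i.succ) (g i) := by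
            rw [Fin.prod_univ_succ]
            simp only [Fin.cons_zero, Fin.cons_succ]
          rw [hgm, hpr, mul_smul_comm, smul_smul]
      _ = ∑ g ∈ Finset.Nat.antidiagonalTuple (k + 1) l,
            Nat.multinomial Finset.univ g • ∏ i, A (sv i) (g i) :=
          (sum_adT_succ k l (fun g => Nat.multinomial Finset.univ g • ∏ i, A (sv i) (g i))).symm

end

/-- Let `R` be a commutative ring, `D : R → R` a derivation, `F ∈ R`, and
`A` the associated double sequence.  Let `k ≥ 2` and `s = s₁ + ⋯ + s_k` with each `sᵢ ≥ 1`.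
Then for every `l ≥ 0`,
`(s!/(s₁!⋯s_k!)) • A s l = ∑_{l₁+⋯+l_k = l, lᵢ ≥ 1} (l!/(l₁!⋯l_k!)) • A s₁ l₁ ⋯ A s_k l_k`. -/
theorem statement1 {R : Type*} [CommRing R] (D : R → R)
    (hD_add : ∀ a b : R, D (a + b) = D a + D b)
    (hD_mul : ∀ a b : R, D (a * b) = D a * b + a * D b)
    (F : R) (A : ℕ → ℕ → R)
    (hA00 : A 0 0 = 1)
    (hAvanish : ∀ s l : ℕ, l < s → A s l = 0)
    (hArec0 : ∀ l : ℕ, A 0 (l + 1) = F * D (A 0 l))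
    (hArec : ∀ s l : ℕ, A (s + 1) (l + 1) = F * (D (A (s + 1) l) + A s l))
    (k : ℕ) (hk : 2 ≤ k) (sv : Fin k → ℕ) (hsv : ∀ i, 1 ≤ sv i) (l : ℕ) :
    Nat.multinomial Finset.univ sv • A (∑ i, sv i) l =
      ∑ g ∈ (Finset.Nat.antidiagonalTuple k l).filter (fun g => ∀ i, 1 ≤ g i),
        Nat.multinomial Finset.univ g • ∏ i, A (sv i) (g i) := by
  have hD1 : D (1 : R) = 0 := by
    have h := hD_mul 1 1
    rw [mul_one, one_mul, mul_one] at h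
    exact (left_eq_add.mp h)
  have hD0 : D (0 : R) = 0 := map_zero (AddMonoidHom.mk' D hD_add)
  have hA0succ : ∀ l : ℕ, A 0 (l + 1) = 0 := by
    intro l
    induction l with
    | zero => rw [hArec0, hA00, hD1, mul_zero]
    | succ l ihl => rw [hArec0, ihl, hD0, mul_zero]
  have hfull : ∑ g ∈ (Finset.Nat.antidiagonalTuple k l).filter (fun g => ∀ i, 1 ≤ g i),
        Nat.multinomial Finset.univ g • ∏ i, A (sv i) (g i)
      = ∑ g ∈ Finset.Nat.antidiagonalTuple k l,
        Nat.multinomial Finset.univ g • ∏ i, A (sv i) (g i) := by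
    apply Finset.sum_filter_of_ne
    intro g _ hne
    by_contra hc
    push_neg at hc
    obtain ⟨i, hi⟩ := hc
    have hgi : g i = 0 := by omega
    apply hne
    have : A (sv i) (g i) = 0 := by
      rw [hgi]
      exact hAvanish _ _ (hsv i)
    rw [Finset.prod_eq_zero (Finset.mem_univ i) this, smul_zero]
  rw [hfull]
  exact keyLk F A (AddMonoidHom.mk' D hD_add) hD_mul hA00 hAvanish hA0succ hArec k sv l
end

section
/- Let R' be an associative unital ℚ-algebra, R ⊆ R' a commutative subalgebra, F ∈ R, and x ∈ R' such that D : r ↦ rx − xr is a derivation of R. In the algebra R'[[λ]] of formal power series in a central variable λ over R', one has exp(λxF) = Σ_{s=0}^∞ x^s α^s / s!, where exp(λxF) := Σ_{k≥0} (xF)^k λ^k / k! and α := Σ_{l≥1} A_{1,l} λ^l / l! ∈ R'[[λ]] (the right-hand sum converges coefficientwise in R'[[λ]] since α has zero constant term). Here the ordering x^s α^s, with all factors x on the left, is essential, since in general α does not commute with x. -/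
open Finset PowerSeries

section Statement4Aux

variable {R' : Type*} [Ring R'] [Algebra ℚ R']

/-- The commutator map `r ↦ r*x - x*r` as a `ℚ`-linear map. -/
private def Dl (x : R') : R' →ₗ[ℚ] R' where
  toFun r := r * x - x * r
  map_add' a b := by noncomm_ring
  map_smul' q a := by
    simp only [RingHom.id_apply, smul_sub, smul_mul_assoc, mul_smul_comm]

private lemma Dl_apply (x a : R') : Dl x a = a * x - x * a := rfl

private lemma Dl_mul (x a b : R') : Dl x (a * b) = a * Dl x b + Dl x a * b := by
  simp only [Dl_apply]; noncomm_ring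

variable (R : Subalgebra ℚ R') (x F : R') (A : ℕ → ℕ → R')

private lemma auxA0 (hA00 : A 0 0 = 1)
    (hArec0 : ∀ l : ℕ, A 0 (l + 1) = F * (A 0 l * x - x * A 0 l)) :
    ∀ m : ℕ, 0 < m → A 0 m = 0 := by
  intro m hm
  induction m with
  | zero => omega
  | succ l ih =>
    rcases Nat.eq_zero_or_pos l with h | h
    · subst h; rw [hArec0, hA00]; simp
    · rw [hArec0, ih h]; simp

section Hyps

variable (hRcomm : ∀ a ∈ R, ∀ b ∈ R, a * b = b * a)
    (hF : F ∈ R)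
    (hD : ∀ r ∈ R, r * x - x * r ∈ R)
    (hAmem : ∀ s l : ℕ, A s l ∈ R)
    (hA00 : A 0 0 = 1)
    (hAvanish : ∀ s l : ℕ, l < s → A s l = 0)
    (hArec0 : ∀ l : ℕ, A 0 (l + 1) = F * (A 0 l * x - x * A 0 l))
    (hArec : ∀ s l : ℕ,
      A (s + 1) (l + 1) = F * ((A (s + 1) l * x - x * A (s + 1) l) + A s l))

include hRcomm hF hAmem hA00 hAvanish hArec0 hArec

/-- The key combinatorial identity:
`(t+1) • A (t+1) n = ∑_{k<n} C(n,k) • (A t k * A 1 (n-k))`. -/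
private lemma auxK :
    ∀ n t : ℕ, ((t : ℚ) + 1) • A (t + 1) n =
      ∑ k ∈ Finset.range n, ((n.choose k : ℚ)) • (A t k * A 1 (n - k)) := by
  have hArec' : ∀ s l : ℕ, A (s + 1) (l + 1) = F * (Dl x (A (s + 1) l) + A s l) := by
    intro s l; rw [hArec]; rfl
  have hA11 : A 1 1 = F := by
    rw [hArec' 0 0, hAvanish 1 0 one_pos, hA00]
    simp [Dl_apply]
  have hFd : ∀ s l : ℕ, F * Dl x (A (s + 1) l) = A (s + 1) (l + 1) - F * A s l := by
    intro s l; rw [hArec' s l, mul_add]; abel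
  -- commuting helpers
  have hcomm : ∀ (a : R') (_ : a ∈ R) (s l : ℕ), A s l * a = a * A s l := by
    intro a ha s l; exact hRcomm (A s l) (hAmem s l) a ha
  intro n
  induction n with
  | zero =>
    intro t
    rw [hAvanish (t + 1) 0 (Nat.succ_pos t)]
    simp
  | succ n ih =>
    intro t
    cases t with
    | zero =>
      -- LHS = A 1 (n+1); RHS sum has only the k = 0 term
      rw [Finset.sum_eq_single 0]
      · simp [hA00]
      · intro k hk hk0
        rw [auxA0 x F A hA00 hArec0 k (Nat.pos_of_ne_zero hk0)]
        simp
      · intro h; simp at h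
    | succ u =>
      have castgoal : ((u + 1 : ℕ) : ℚ) + 1 = (u : ℚ) + 2 := by push_cast; ring
      rw [castgoal]
      -- abbreviations
      set S1 := ∑ k ∈ Finset.range n, ((n.choose k : ℚ)) • (A (u + 1) (k + 1) * A 1 (n - k)) with hS1
      set S3 := ∑ k ∈ Finset.range n, ((n.choose k : ℚ)) • (A (u + 1) k * A 1 (n + 1 - k)) with hS3
      -- Step 1 : LHS = S1 + S3 + F * A (u+1) n
      have ihu1 : ((u : ℚ) + 2) • A (u + 2) n =
          ∑ k ∈ Finset.range n, ((n.choose k : ℚ)) • (A (u + 1) k * A 1 (n - k)) := by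
        have := ih (u + 1)
        rwa [castgoal] at this
      have hL : ((u : ℚ) + 2) • A (u + 2) (n + 1) = S1 + S3 + F * A (u + 1) n := by
        rw [hArec' (u + 1) n, mul_add, smul_add, ← mul_smul_comm, ← mul_smul_comm,
          ← map_smul (Dl x), ihu1]
        have expand : F * (Dl x) (∑ k ∈ Finset.range n,
            (↑(n.choose k) : ℚ) • (A (u + 1) k * A 1 (n - k)))
            = S1 + S3 - ((u : ℚ) + 1) • (F * A (u + 1) n) := by
          simp only [map_sum, map_smul, Dl_mul, Finset.mul_sum, mul_smul_comm]
          have term : ∀ k ∈ Finset.range n,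
              (↑(n.choose k) : ℚ) • (F * (A (u + 1) k * Dl x (A 1 (n - k)) +
                Dl x (A (u + 1) k) * A 1 (n - k)))
              = (↑(n.choose k) : ℚ) • (A (u + 1) (k + 1) * A 1 (n - k))
                + (↑(n.choose k) : ℚ) • (A (u + 1) k * A 1 (n + 1 - k))
                - (↑(n.choose k) : ℚ) • (F * (A u k * A 1 (n - k))) := by
            intro k hk
            rw [Finset.mem_range] at hk
            have h1 : F * (A (u + 1) k * Dl x (A 1 (n - k)))
                = A (u + 1) k * A 1 (n + 1 - k) := by
              rw [← mul_assoc, ← hcomm F hF (u + 1) k, mul_assoc]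
              have hnk : n - k = (n - k - 1) + 1 := by omega
              have : F * Dl x (A 1 (n - k)) = A 1 (n + 1 - k) := by
                rw [hnk, hFd 0, auxA0 x F A hA00 hArec0 _ (by omega)]
                have : n - k - 1 + 1 + 1 = n + 1 - k := by omega
                rw [this]; simp
              rw [this]
            have h2 : F * (Dl x (A (u + 1) k) * A 1 (n - k))
                = A (u + 1) (k + 1) * A 1 (n - k) - F * (A u k * A 1 (n - k)) := by
              rw [← mul_assoc, hFd u k, sub_mul, mul_assoc]
            rw [mul_add, h1, h2, smul_add, smul_sub]
            abel
          rw [Finset.sum_congr rfl term, Finset.sum_sub_distrib, Finset.sum_add_distrib]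
          have ihu : ∑ k ∈ Finset.range n,
              (↑(n.choose k) : ℚ) • (F * (A u k * A 1 (n - k)))
              = ((u : ℚ) + 1) • (F * A (u + 1) n) := by
            have step : ∀ k ∈ Finset.range n,
                (↑(n.choose k) : ℚ) • (F * (A u k * A 1 (n - k)))
                = F * ((↑(n.choose k) : ℚ) • (A u k * A 1 (n - k))) :=
              fun k _ => (mul_smul_comm _ _ _).symm
            rw [Finset.sum_congr rfl step, ← Finset.mul_sum, ← ih u, mul_smul_comm]
          rw [ihu]
        rw [expand, mul_smul_comm]
        have : ((u : ℚ) + 2) • (F * A (u + 1) n)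
            = ((u : ℚ) + 1) • (F * A (u + 1) n) + F * A (u + 1) n := by
          rw [show ((u : ℚ) + 2) = ((u : ℚ) + 1) + 1 by ring, add_smul, one_smul]
        rw [this]; abel
      rw [hL]
      -- Step 2 : RHS = S1 + S3 + F * A (u+1) n
      rw [Finset.sum_range_succ']
      have h0term : ((((n + 1).choose 0 : ℕ)) : ℚ) • (A (u + 1) 0 * A 1 (n + 1 - 0)) = 0 := by
        rw [hAvanish (u + 1) 0 (Nat.succ_pos u)]; simp
      rw [h0term, add_zero]
      have pascal : ∀ j ∈ Finset.range n,
          ((((n + 1).choose (j + 1) : ℕ)) : ℚ) • (A (u + 1) (j + 1) * A 1 (n + 1 - (j + 1)))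
          = ((n.choose j : ℚ)) • (A (u + 1) (j + 1) * A 1 (n - j))
            + ((n.choose (j + 1) : ℚ)) • (A (u + 1) (j + 1) * A 1 (n - j)) := by
        intro j hj
        have : n + 1 - (j + 1) = n - j := by omega
        rw [this, Nat.choose_succ_succ']
        push_cast
        rw [add_smul]
      rw [Finset.sum_congr rfl pascal, Finset.sum_add_distrib]
      -- second sum equals S3 + F * A (u+1) n
      have hT : ∑ j ∈ Finset.range n,
          ((n.choose (j + 1) : ℚ)) • (A (u + 1) (j + 1) * A 1 (n - j))
          = S3 + F * A (u + 1) n := by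
        have hG : ∑ k ∈ Finset.range (n + 1),
            ((n.choose k : ℚ)) • (A (u + 1) k * A 1 (n + 1 - k))
            = ∑ j ∈ Finset.range n,
              ((n.choose (j + 1) : ℚ)) • (A (u + 1) (j + 1) * A 1 (n - j)) := by
          rw [Finset.sum_range_succ']
          have : ((n.choose 0 : ℚ)) • (A (u + 1) 0 * A 1 (n + 1 - 0)) = 0 := by
            rw [hAvanish (u + 1) 0 (Nat.succ_pos u)]; simp
          rw [this, add_zero]
          exact Finset.sum_congr rfl fun j hj => by
            have : n + 1 - (j + 1) = n - j := by omega
            rw [this]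
        have hG2 : ∑ k ∈ Finset.range (n + 1),
            ((n.choose k : ℚ)) • (A (u + 1) k * A 1 (n + 1 - k))
            = S3 + F * A (u + 1) n := by
          rw [Finset.sum_range_succ]
          have : n + 1 - n = 1 := by omega
          rw [this, Nat.choose_self, hA11, hcomm F hF (u + 1) n]
          push_cast
          rw [one_smul]
        rw [← hG, hG2]
      rw [hT]
      abel

/-- The coefficients of `α ^ s`: `coeff n (α^s) = (s!/n!) • A s n`. -/
private lemma auxMain
    (α : PowerSeries R')
    (hα : α = PowerSeries.mk fun l => if l = 0 then 0 else ((l.factorial : ℚ)⁻¹) • A 1 l) :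
    ∀ n s : ℕ, PowerSeries.coeff (R := R') n (α ^ s)
      = ((s.factorial : ℚ) * ((n.factorial : ℚ))⁻¹) • A s n := by
  have auxk := auxK R x F A hRcomm hF hAmem hA00 hAvanish hArec0 hArec
  have hA0 := auxA0 x F A hA00 hArec0
  intro n
  induction n using Nat.strong_induction_on with
  | _ n ih =>
    match n with
    | 0 =>
      intro s
      cases s with
      | zero => simp [hA00]
      | succ t =>
        rw [PowerSeries.coeff_zero_eq_constantCoeff, map_pow, hα]
        rw [hAvanish (t + 1) 0 (Nat.succ_pos t)]
        simp [zero_pow (Nat.succ_ne_zero t)]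
    | (n + 1) =>
      intro s
      cases s with
      | zero =>
        rw [pow_zero, PowerSeries.coeff_one, if_neg (Nat.succ_ne_zero n),
          hA0 (n + 1) (Nat.succ_pos n), smul_zero]
      | succ t =>
        rw [pow_succ, PowerSeries.coeff_mul,
          Finset.Nat.sum_antidiagonal_eq_sum_range_succ_mk, Finset.sum_range_succ]
        have hlast : (PowerSeries.coeff (R := R') (n + 1 - (n + 1))) α = 0 := by
          rw [hα, Nat.sub_self]; simp
        rw [hlast, mul_zero, add_zero]
        have key := auxk (n + 1) t
        have hAeq : A (t + 1) (n + 1) = ((t : ℚ) + 1)⁻¹ •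
            ∑ k ∈ Finset.range (n + 1),
              (((n + 1).choose k : ℚ)) • (A t k * A 1 (n + 1 - k)) := by
          rw [← key, smul_smul, inv_mul_cancel₀ (by positivity), one_smul]
        rw [hAeq, smul_smul, Finset.smul_sum]
        apply Finset.sum_congr rfl
        intro k hk
        rw [Finset.mem_range] at hk
        rw [ih k (by omega) t, hα, PowerSeries.coeff_mk, if_neg (by omega), smul_smul,
          smul_mul_smul_comm]
        show (_ • (A t k * A 1 (n + 1 - k)) : R') = _ • (A t k * A 1 (n + 1 - k))
        congr 1
        · have hch : (((n + 1).choose k : ℚ)) =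
            ((n + 1).factorial : ℚ) / ((k.factorial : ℚ) * (((n + 1 - k).factorial : ℚ))) :=
            Nat.cast_choose ℚ (by omega)
          have h1 : ((n + 1).factorial : ℚ) ≠ 0 := by positivity
          have h2 : ((k).factorial : ℚ) ≠ 0 := by positivity
          have h3 : (((n + 1 - k)).factorial : ℚ) ≠ 0 := by positivity
          rw [hch, Nat.factorial_succ (t)]
          push_cast
          field_simp

include hD in
/-- Decomposition of powers of `x*F`: `(x*F)^l = ∑_{s ≤ l} x^s * A s l`. -/
private lemma auxP :
    ∀ l : ℕ, (x * F) ^ l = ∑ s ∈ Finset.range (l + 1), x ^ s * A s l := by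
  have hA0 := auxA0 x F A hA00 hArec0
  intro l
  induction l with
  | zero => simp [hA00]
  | succ l ih =>
    rw [pow_succ, ih, Finset.sum_mul]
    have term : ∀ s ∈ Finset.range (l + 1),
        x ^ s * A s l * (x * F)
        = x ^ s * (F * (A s l * x - x * A s l)) + x ^ (s + 1) * (F * A s l) := by
      intro s hs
      have hd : (A s l * x - x * A s l) * F = F * (A s l * x - x * A s l) :=
        hRcomm _ (hD _ (hAmem s l)) F hF
      have hf : A s l * F = F * A s l := hRcomm _ (hAmem s l) F hF
      have expand : A s l * (x * F) = (A s l * x - x * A s l) * F + x * (A s l * F) := by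
        noncomm_ring
      rw [mul_assoc, expand, hd, hf, mul_add, pow_succ]
      rw [mul_assoc (x ^ s) x (F * A s l)]
    rw [Finset.sum_congr rfl term, Finset.sum_add_distrib]
    -- now compare with the RHS
    rw [Finset.sum_range_succ' (fun s => x ^ s * A s (l + 1)) (l + 1)]
    have h0 : x ^ 0 * A 0 (l + 1) = F * (A 0 l * x - x * A 0 l) := by
      rw [pow_zero, one_mul, hArec0]
    have hterm2 : ∀ j ∈ Finset.range (l + 1),
        x ^ (j + 1) * A (j + 1) (l + 1)
        = x ^ (j + 1) * (F * (A (j + 1) l * x - x * A (j + 1) l))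
          + x ^ (j + 1) * (F * A j l) := by
      intro j hj
      rw [hArec j l, mul_add, mul_add]
    rw [h0, Finset.sum_congr rfl hterm2, Finset.sum_add_distrib]
    have hfirst : ∑ s ∈ Finset.range (l + 1), x ^ s * (F * (A s l * x - x * A s l))
        = (∑ j ∈ Finset.range (l + 1),
            x ^ (j + 1) * (F * (A (j + 1) l * x - x * A (j + 1) l)))
          + F * (A 0 l * x - x * A 0 l) := by
      have e1 : ∑ s ∈ Finset.range (l + 2), x ^ s * (F * (A s l * x - x * A s l))
          = (∑ j ∈ Finset.range (l + 1),
              x ^ (j + 1) * (F * (A (j + 1) l * x - x * A (j + 1) l)))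
            + F * (A 0 l * x - x * A 0 l) := by
        rw [Finset.sum_range_succ' (fun s => x ^ s * (F * (A s l * x - x * A s l))) (l + 1)]
        rw [pow_zero, one_mul]
      have e2 : ∑ s ∈ Finset.range (l + 2), x ^ s * (F * (A s l * x - x * A s l))
          = ∑ s ∈ Finset.range (l + 1), x ^ s * (F * (A s l * x - x * A s l)) := by
        rw [Finset.sum_range_succ]
        rw [hAvanish (l + 1) l (Nat.lt_succ_self l)]
        simp
      rw [← e2, e1]
    rw [hfirst]
    abel

end Hyps

end Statement4Aux

/-- In `R'⟦λ⟧` one has `exp(λxF) = ∑_{s≥0} x^s α^s / s!`, where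
`exp(λxF) := ∑_k (xF)^k λ^k / k!` and `α := ∑_{l≥1} A 1 l · λ^l / l!`.  The infinite sum on
the right converges coefficientwise: since `α` has zero constant term, for each coefficient
`n` only the terms with `s ≤ n` contribute (the terms with `s > n` have vanishing `n`-th
coefficient, which is the second conjunct below). -/
theorem statement4 {R' : Type*} [Ring R'] [Algebra ℚ R'] (R : Subalgebra ℚ R')
    (hRcomm : ∀ a ∈ R, ∀ b ∈ R, a * b = b * a)
    (x F : R') (hF : F ∈ R)
    (hD : ∀ r ∈ R, r * x - x * r ∈ R)
    (A : ℕ → ℕ → R')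
    (hAmem : ∀ s l : ℕ, A s l ∈ R)
    (hA00 : A 0 0 = 1)
    (hAvanish : ∀ s l : ℕ, l < s → A s l = 0)
    (hArec0 : ∀ l : ℕ, A 0 (l + 1) = F * (A 0 l * x - x * A 0 l))
    (hArec : ∀ s l : ℕ,
      A (s + 1) (l + 1) = F * ((A (s + 1) l * x - x * A (s + 1) l) + A s l))
    (α expXF : PowerSeries R')
    (hα : α = PowerSeries.mk fun l => if l = 0 then 0 else ((l.factorial : ℚ)⁻¹) • A 1 l)
    (hexp : expXF = PowerSeries.mk fun k => ((k.factorial : ℚ)⁻¹) • (x * F) ^ k)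
    (n : ℕ) :
    PowerSeries.coeff (R := R') n expXF =
      ∑ s ∈ Finset.range (n + 1),
        PowerSeries.coeff (R := R') n
          (((s.factorial : ℚ)⁻¹) • ((PowerSeries.C (R := R') x) ^ s * α ^ s)) ∧
    ∀ s : ℕ, n < s →
      PowerSeries.coeff (R := R') n
        (((s.factorial : ℚ)⁻¹) • ((PowerSeries.C (R := R') x) ^ s * α ^ s)) = 0 := by
  have hmain := auxMain R x F A hRcomm hF hAmem hA00 hAvanish hArec0 hArec α hα
  have hterm : ∀ s : ℕ, PowerSeries.coeff (R := R') n
      (((s.factorial : ℚ)⁻¹) • ((PowerSeries.C (R := R') x) ^ s * α ^ s))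
      = ((s.factorial : ℚ)⁻¹ * ((s.factorial : ℚ) * ((n.factorial : ℚ))⁻¹))
        • (x ^ s * A s n) := by
    intro s
    rw [LinearMap.map_smul_of_tower, ← map_pow, PowerSeries.coeff_C_mul, hmain n s, mul_smul_comm, smul_smul]
  constructor
  · rw [hexp, PowerSeries.coeff_mk,
      auxP R x F A hRcomm hF hD hAmem hA00 hAvanish hArec0 hArec n, Finset.smul_sum]
    apply Finset.sum_congr rfl
    intro s hs
    rw [hterm s]
    congr 1
    have : ((s.factorial : ℚ)) ≠ 0 := by positivity
    field_simp
  · intro s hns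
    rw [hterm s, hAvanish s n hns, mul_zero, smul_zero]
end

section
/- Let R' be an associative unital ℚ-algebra, R ⊆ R' a commutative subalgebra, F ∈ R, and x ∈ R' such that D : r ↦ rx − xr is a derivation of R. Then for every G ∈ R and every n ≥ 0, the n-fold iterated commutator ad(xF)^n(G) equals (−1)^n (F·D)^n(G), where ad(xF)(r) := (xF)r − r(xF) and (F·D)(r) := F·D(r). In particular ad(xF)^n(G) lies in R for all n. -/
/-- Let `R'` be an associative unital `ℚ`-algebra, `R ⊆ R'` a commutative
subalgebra, `F ∈ R`, `x ∈ R'` such that `D : r ↦ r*x - x*r` maps `R` into `R`.  Then for every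
`G ∈ R` and `n ≥ 0`, `ad(xF)^n(G) = (-1)^n (F·D)^n(G)`, where `ad(xF)(r) = (xF)r - r(xF)` and
`(F·D)(r) = F·D(r)`.  In particular `ad(xF)^n(G)` lies in `R`. -/
theorem statement5 {R' : Type*} [Ring R'] [Algebra ℚ R'] (R : Subalgebra ℚ R')
    (hRcomm : ∀ a ∈ R, ∀ b ∈ R, a * b = b * a)
    (x F : R') (hF : F ∈ R)
    (hD : ∀ r ∈ R, r * x - x * r ∈ R)
    (G : R') (hG : G ∈ R) (n : ℕ) :
    (fun r => (x * F) * r - r * (x * F))^[n] G =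
      (-1 : R') ^ n * (fun r => F * (r * x - x * r))^[n] G ∧
    (fun r => (x * F) * r - r * (x * F))^[n] G ∈ R := by
  have key : ∀ r ∈ R, (x * F) * r - r * (x * F) = -(F * (r * x - x * r)) := by
    intro r hr
    have h1 : F * r = r * F := hRcomm F hF r hr
    have h2 : F * (r * x - x * r) = (r * x - x * r) * F := hRcomm F hF _ (hD r hr)
    have e1 : x * F * r = x * r * F := by rw [mul_assoc, h1, ← mul_assoc]
    rw [h2, sub_mul, neg_sub, e1, ← mul_assoc]
  have hTm : ∀ m : ℕ, (fun r => F * (r * x - x * r))^[m] G ∈ R := by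
    intro m
    induction m with
    | zero => simpa using hG
    | succ m ih =>
      rw [Function.iterate_succ_apply']
      exact mul_mem hF (hD _ ih)
  induction n with
  | zero => simpa using hG
  | succ n ih =>
    obtain ⟨h1, _⟩ := ih
    rw [Function.iterate_succ_apply', Function.iterate_succ_apply', h1]
    have hB := hTm n
    set B := (fun r => F * (r * x - x * r))^[n] G with hBdef
    have hc : ∀ a : R', a * (-1 : R') ^ n = (-1 : R') ^ n * a := fun a =>
      ((Commute.neg_one_right a).pow_right n).eq
    have step : ∀ c d : R', c * ((-1 : R') ^ n * d) - ((-1 : R') ^ n * d) * c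
        = (-1 : R') ^ n * (c * d - d * c) := by
      intro c d
      rw [mul_sub, ← mul_assoc, hc, mul_assoc, mul_assoc]
    constructor
    · rw [step (x * F) B, key B hB, pow_succ, mul_assoc, neg_one_mul]
    · rw [step (x * F) B, key B hB]
      exact mul_mem (pow_mem (neg_mem (one_mem R)) n)
        (neg_mem (mul_mem hF (hD B hB)))
end

section
/- Let R' be an associative unital ℚ-algebra, R ⊆ R' a commutative subalgebra, x₁,…,x_n ∈ R' pairwise commuting elements such that each map D_i : r ↦ r x_i − x_i r sends R into R and the resulting derivations D₁,…,D_n of R pairwise commute, and let F₁,…,F_n ∈ R. In R'[[λ]] one has exp(λ Σ_{i=1}^n x_i F_i) = Σ_{s₁,…,s_n ≥ 0} x₁^{s₁} ⋯ x_n^{s_n} α₁^{s₁} ⋯ α_n^{s_n} / (s₁! ⋯ s_n!), where exp(λ Σ x_i F_i) := Σ_{k≥0} (Σ_i x_i F_i)^k λ^k / k! and α_i := Σ_{l≥1} A_{0,…,1,…,0,l} λ^l / l! (with 1 in the i-th place), the right-hand sum converging coefficientwise since each α_i has zero constant term. -/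
set_option linter.unusedSectionVars false
open PowerSeries Finset

section Aux
variable {R' : Type*} [Ring R'] [Algebra ℚ R']

/-- coefficientwise "derivative divided by weights": `coeff l (pd f) = (l+1) • coeff (l+1) f`. -/
noncomputable def pd (f : PowerSeries R') : PowerSeries R' :=
  PowerSeries.mk fun l => (((l + 1 : ℕ) : ℚ)) • PowerSeries.coeff (l + 1) f

lemma coeff_pd (f : PowerSeries R') (l : ℕ) :
    PowerSeries.coeff l (pd f) = (((l + 1 : ℕ) : ℚ)) • PowerSeries.coeff (l + 1) f :=
  PowerSeries.coeff_mk _ _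

lemma pd_mul (f g : PowerSeries R') : pd (f * g) = pd f * g + f * pd g := by
  ext l
  rw [coeff_pd, map_add, PowerSeries.coeff_mul, PowerSeries.coeff_mul, PowerSeries.coeff_mul,
    Finset.smul_sum]
  have h1 : ∀ p ∈ Finset.HasAntidiagonal.antidiagonal (l + 1),
      (((l + 1 : ℕ) : ℚ)) • (PowerSeries.coeff p.1 f * PowerSeries.coeff p.2 g) =
      ((p.1 : ℚ) • (PowerSeries.coeff p.1 f) * PowerSeries.coeff p.2 g) +
      (PowerSeries.coeff p.1 f * (p.2 : ℚ) • PowerSeries.coeff p.2 g) := by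
    intro p hp
    rw [Finset.HasAntidiagonal.mem_antidiagonal] at hp
    rw [← hp, Nat.cast_add]
    simp [add_smul, smul_mul_assoc, mul_smul_comm]
  rw [Finset.sum_congr rfl h1, Finset.sum_add_distrib]
  congr 1
  · rw [Finset.Nat.sum_antidiagonal_succ]
    simp only [Nat.cast_zero, zero_smul, zero_mul, zero_add]
    refine Finset.sum_congr rfl fun p hp => ?_
    rw [coeff_pd]
  · rw [Finset.Nat.sum_antidiagonal_succ']
    simp only [Nat.cast_zero, zero_smul, mul_zero, zero_add]
    refine Finset.sum_congr rfl fun p hp => ?_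
    rw [coeff_pd]
end Aux

section ListAux
variable {M : Type*} [Monoid M]

lemma ofFn_pow_update {n : ℕ} (y : Fin n → M) (hy : ∀ i j, Commute (y i) (y j))
    (s : Fin n → ℕ) (i : Fin n) :
    (List.ofFn fun j => y j ^ (Function.update s i (s i + 1)) j).prod =
      y i * (List.ofFn fun j => y j ^ s j).prod := by
  induction n with
  | zero => exact absurd i.2 (by omega)
  | succ n ih =>
    rw [List.ofFn_succ, List.ofFn_succ, List.prod_cons, List.prod_cons]
    rcases Fin.eq_zero_or_eq_succ i with hi | ⟨j, hj⟩
    · subst hi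
      have h1 : ∀ k : Fin n, (Function.update s 0 (s 0 + 1)) k.succ = s k.succ := fun k =>
        Function.update_of_ne (by simp [Fin.ext_iff]) _ _
      have h2 : (Function.update s 0 (s 0 + 1)) 0 = s 0 + 1 := Function.update_self _ _ _
      simp only [h1, h2]
      rw [pow_succ', mul_assoc]
    · subst hj
      have h0 : (Function.update s j.succ (s j.succ + 1)) 0 = s 0 :=
        Function.update_of_ne (by simp [Fin.ext_iff]) _ _
      have h1 : ∀ k : Fin n, (Function.update s j.succ (s j.succ + 1)) k.succ =
          (Function.update (s ∘ Fin.succ) j ((s ∘ Fin.succ) j + 1)) k := by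
        intro k
        by_cases hk : k = j
        · subst hk; simp [Function.update_self]
        · rw [Function.update_of_ne (fun h => hk (Fin.succ_injective _ h)) _ _,
            Function.update_of_ne hk]
          rfl
      simp only [h0, h1]
      rw [ih (fun k => y k.succ) (fun a b => hy a.succ b.succ) (s ∘ Fin.succ) j]
      have hc : Commute (y j.succ) (y 0 ^ s 0) := ((hy j.succ 0).pow_right _)
      rw [← mul_assoc, ← hc.eq, mul_assoc]
      rfl
end ListAux
open PowerSeries Finset

section Aux2
variable {R' : Type*} [Ring R'] [Algebra ℚ R'] (R : Subalgebra ℚ R')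

lemma mul_comm_of_mem (hRcomm : ∀ a ∈ R, ∀ b ∈ R, a * b = b * a)
    (f g : PowerSeries R') (hf : ∀ k, PowerSeries.coeff k f ∈ R)
    (hg : ∀ k, PowerSeries.coeff k g ∈ R) : f * g = g * f := by
  ext l
  rw [PowerSeries.coeff_mul, PowerSeries.coeff_mul, ← Finset.Nat.sum_antidiagonal_swap]
  refine Finset.sum_congr rfl fun p hp => ?_
  simp only [Prod.fst_swap, Prod.snd_swap]
  exact (hRcomm _ (hg p.1) _ (hf p.2)).symm

lemma sum_update_lt {n : ℕ} (s : Fin n → ℕ) (i : Fin n) (hi : s i ≠ 0) :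
    (∑ j, Function.update s i (s i - 1) j) + 1 = ∑ j, s j := by
  rw [Finset.sum_update_of_mem (Finset.mem_univ i)]
  have h := Finset.add_sum_erase Finset.univ s (Finset.mem_univ i)
  rw [Finset.erase_eq] at h
  omega
end Aux2
open PowerSeries Finset

section Aux3
variable {R' : Type*} [Ring R'] [Algebra ℚ R'] {n : ℕ}
  (x F : Fin n → R') (A : (Fin n → ℕ) → ℕ → R')

/-- generating coefficients `A s l / l!` -/
noncomputable def phiA (A : (Fin n → ℕ) → ℕ → R') (s : Fin n → ℕ) : PowerSeries R' :=
  PowerSeries.mk fun l => ((l.factorial : ℚ)⁻¹) • A s l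

lemma coeff_phiA (s : Fin n → ℕ) (l : ℕ) :
    PowerSeries.coeff l (phiA A s) = ((l.factorial : ℚ)⁻¹) • A s l :=
  PowerSeries.coeff_mk _ _

lemma fact_inv_step (l : ℕ) (a : R') :
    ((l + 1 : ℕ) : ℚ) • ((((l+1).factorial : ℚ)⁻¹) • a) = ((l.factorial : ℚ)⁻¹) • a := by
  rw [smul_smul]
  congr 1
  rw [Nat.factorial_succ, Nat.cast_mul, mul_inv, ← mul_assoc,
    mul_inv_cancel₀ (Nat.cast_ne_zero.mpr (Nat.succ_ne_zero l)), one_mul]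

variable (hA0 : A 0 0 = 1)
  (hAinit : ∀ s : Fin n → ℕ, s ≠ 0 → A s 0 = 0)
  (hArec : ∀ (s : Fin n → ℕ) (l : ℕ),
      A s (l + 1) = ∑ i, F i * ((A s l * x i - x i * A s l) +
        if s i = 0 then 0 else A (Function.update s i (s i - 1)) l))

include hA0 hArec in
lemma A_zero : ∀ l, A 0 l = if l = 0 then 1 else 0 := by
  intro l
  induction l with
  | zero => simpa using hA0
  | succ l ih =>
    rw [hArec]
    rcases Nat.eq_zero_or_pos l with rfl | hl
    · simp [ih]
    · simp [ih, Nat.pos_iff_ne_zero.mp hl]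

include hAinit hArec in
lemma A_vanish : ∀ (l : ℕ) (s : Fin n → ℕ), l < ∑ i, s i → A s l = 0 := by
  intro l
  induction l with
  | zero =>
    intro s hs
    apply hAinit
    rintro rfl
    simp at hs
  | succ l ih =>
    intro s hs
    rw [hArec]
    apply Finset.sum_eq_zero
    intro i _
    rw [ih s (by omega)]
    rcases eq_or_ne (s i) 0 with h | h
    · simp [h]
    · have hupd := sum_update_lt s i h
      rw [ih _ (by omega)]
      simp [h]

include hA0 hArec in
lemma phiA_zero : phiA A 0 = 1 := by
  ext l
  rw [coeff_phiA, A_zero x F A hA0 hArec, PowerSeries.coeff_one]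
  rcases Nat.eq_zero_or_pos l with rfl | hl
  · simp
  · simp [Nat.pos_iff_ne_zero.mp hl]

include hArec in
lemma pd_phiA (s : Fin n → ℕ) :
    pd (phiA A s) = ∑ j, PowerSeries.C (F j) *
      ((phiA A s * PowerSeries.C (x j) - PowerSeries.C (x j) * phiA A s) +
        if s j = 0 then 0 else phiA A (Function.update s j (s j - 1))) := by
  ext l
  rw [coeff_pd, coeff_phiA, fact_inv_step, hArec, Finset.smul_sum, map_sum]
  refine Finset.sum_congr rfl fun j _ => ?_
  rw [PowerSeries.coeff_C_mul, map_add, map_sub, PowerSeries.coeff_mul_C,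
    PowerSeries.coeff_C_mul, coeff_phiA, apply_ite (PowerSeries.coeff l), map_zero, coeff_phiA]
  rw [← mul_smul_comm]
  congr 1
  rw [smul_add]
  congr 1
  · simp [smul_mul_assoc, mul_smul_comm, smul_sub]
  · split <;> simp
end Aux3

section Aux4
variable {R' : Type*} [Ring R'] [Algebra ℚ R'] {n : ℕ}
  (R : Subalgebra ℚ R') (x F : Fin n → R') (A : (Fin n → ℕ) → ℕ → R')

lemma coeff_phiA_mem (hAmem : ∀ s l, A s l ∈ R) (s : Fin n → ℕ) (l : ℕ) :
    PowerSeries.coeff l (phiA A s) ∈ R := by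
  rw [coeff_phiA]
  exact R.smul_mem (hAmem s l) _

lemma phiA_C_comm (hRcomm : ∀ a ∈ R, ∀ b ∈ R, a * b = b * a)
    (hAmem : ∀ s l, A s l ∈ R) (a : R') (ha : a ∈ R) (s : Fin n → ℕ) :
    phiA A s * PowerSeries.C a = PowerSeries.C a * phiA A s := by
  refine mul_comm_of_mem R hRcomm _ _ (coeff_phiA_mem R A hAmem s) fun k => ?_
  rw [PowerSeries.coeff_C]
  split
  · exact ha
  · exact R.zero_mem

lemma upd_add_single {s : Fin n → ℕ} {i j : Fin n} (hji : j ≠ i) :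
    Function.update s j (s j - 1) + (Pi.single i 1 : Fin n → ℕ) =
      Function.update (s + (Pi.single i 1 : Fin n → ℕ)) j
        ((s + (Pi.single i 1 : Fin n → ℕ)) j - 1) := by
  funext k
  rcases eq_or_ne k j with rfl | hk
  · simp [Function.update_self, Pi.single_eq_of_ne hji]
  · simp [Function.update_of_ne hk]

lemma upd_succ_sub (s : Fin n → ℕ) (i : Fin n) :
    Function.update (s + (Pi.single i 1 : Fin n → ℕ)) i
      ((s + (Pi.single i 1 : Fin n → ℕ)) i - 1) = s := by
  funext k
  rcases eq_or_ne k i with rfl | hk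
  · simp [Function.update_self]
  · simp [Function.update_of_ne hk, Pi.single_eq_of_ne hk]

lemma upd_sub_add_single {s : Fin n → ℕ} {i : Fin n} (hsi : s i ≠ 0) :
    Function.update s i (s i - 1) + (Pi.single i 1 : Fin n → ℕ) = s := by
  funext k
  rcases eq_or_ne k i with rfl | hk
  · simp [Function.update_self]
    omega
  · simp [Function.update_of_ne hk, Pi.single_eq_of_ne hk]

lemma single_ne_zero' (i : Fin n) : (Pi.single i 1 : Fin n → ℕ) ≠ 0 := by
  intro h
  have := congrFun h i
  simp [Pi.single_eq_same] at this

lemma add_single_ne_zero (s : Fin n → ℕ) (i : Fin n) :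
    s + (Pi.single i 1 : Fin n → ℕ) ≠ 0 := by
  intro h
  have := congrFun h i
  simp [Pi.single_eq_same] at this

end Aux4

section Aux5
variable {R' : Type*} [Ring R'] [Algebra ℚ R'] {n : ℕ}
  (R : Subalgebra ℚ R') (x F : Fin n → R') (A : (Fin n → ℕ) → ℕ → R')

lemma pd_alpha
    (hA0 : A 0 0 = 1)
    (hArec : ∀ (s : Fin n → ℕ) (l : ℕ),
      A s (l + 1) = ∑ i, F i * ((A s l * x i - x i * A s l) +
        if s i = 0 then 0 else A (Function.update s i (s i - 1)) l))
    (i : Fin n) :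
    pd (phiA A (Pi.single i 1)) =
      (∑ j, PowerSeries.C (F j) *
        (phiA A (Pi.single i 1) * PowerSeries.C (x j) -
          PowerSeries.C (x j) * phiA A (Pi.single i 1))) + PowerSeries.C (F i) := by
  rw [pd_phiA x F A hArec]
  have h1 : ∀ j : Fin n, PowerSeries.C (F j) *
      ((phiA A (Pi.single i 1) * PowerSeries.C (x j) -
        PowerSeries.C (x j) * phiA A (Pi.single i 1)) +
        (if (Pi.single i 1 : Fin n → ℕ) j = 0 then 0 else
          phiA A (Function.update (Pi.single i 1 : Fin n → ℕ) j
            ((Pi.single i 1 : Fin n → ℕ) j - 1)))) =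
      PowerSeries.C (F j) *
        (phiA A (Pi.single i 1) * PowerSeries.C (x j) -
          PowerSeries.C (x j) * phiA A (Pi.single i 1)) +
        (if j = i then PowerSeries.C (F i) else 0) := by
    intro j
    rcases eq_or_ne j i with rfl | hj
    · have h2 : Function.update (Pi.single j 1 : Fin n → ℕ) j
          ((Pi.single j 1 : Fin n → ℕ) j - 1) = 0 := by
        funext k
        rcases eq_or_ne k j with rfl | hk
        · simp
        · simp [Function.update_of_ne hk, Pi.single_eq_of_ne hk]
      rw [h2, phiA_zero x F A hA0 hArec]
      simp [Pi.single_eq_same, mul_add]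
    · simp [Pi.single_eq_of_ne hj, hj]
  rw [Finset.sum_congr rfl fun j _ => h1 j, Finset.sum_add_distrib, Finset.sum_ite_eq']
  simp

lemma key
    (hRcomm : ∀ a ∈ R, ∀ b ∈ R, a * b = b * a)
    (hF : ∀ i, F i ∈ R)
    (hAmem : ∀ s l, A s l ∈ R)
    (hA0 : A 0 0 = 1)
    (hAinit : ∀ s : Fin n → ℕ, s ≠ 0 → A s 0 = 0)
    (hArec : ∀ (s : Fin n → ℕ) (l : ℕ),
      A s (l + 1) = ∑ i, F i * ((A s l * x i - x i * A s l) +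
        if s i = 0 then 0 else A (Function.update s i (s i - 1)) l)) :
    ∀ (l : ℕ) (s : Fin n → ℕ) (i : Fin n),
      PowerSeries.coeff l (phiA A (Pi.single i 1) * phiA A s) =
        ((s i + 1 : ℕ) : ℚ) • PowerSeries.coeff l
          (phiA A (s + (Pi.single i 1 : Fin n → ℕ))) := by
  intro l
  induction l with
  | zero =>
    intro s i
    have h1 : A (Pi.single i 1) 0 = 0 := hAinit _ (single_ne_zero' i)
    have h2 : A (s + (Pi.single i 1 : Fin n → ℕ)) 0 = 0 := hAinit _ (add_single_ne_zero s i)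
    rw [PowerSeries.coeff_mul]
    simp [coeff_phiA, h1, h2]
  | succ l ih =>
    intro s i
    have hq : ((l + 1 : ℕ) : ℚ) ≠ 0 := Nat.cast_ne_zero.mpr (Nat.succ_ne_zero l)
    have hinj : ∀ a b : R', ((l + 1 : ℕ) : ℚ) • a = ((l + 1 : ℕ) : ℚ) • b → a = b := by
      intro a b h
      have h2 := congrArg (fun y : R' => ((l + 1 : ℕ) : ℚ)⁻¹ • y) h
      simp only [smul_smul, inv_mul_cancel₀ hq, one_smul] at h2
      exact h2
    apply hinj
    -- power-series identity for the derivative of the product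
    have hcommC : ∀ j : Fin n, phiA A (Pi.single i 1) * PowerSeries.C (F j) =
        PowerSeries.C (F j) * phiA A (Pi.single i 1) :=
      fun j => phiA_C_comm R A hRcomm hAmem (F j) (hF j) _
    have hps : pd (phiA A (Pi.single i 1) * phiA A s) =
        (∑ j, PowerSeries.C (F j) *
          ((phiA A (Pi.single i 1) * phiA A s * PowerSeries.C (x j)
            - PowerSeries.C (x j) * (phiA A (Pi.single i 1) * phiA A s))
            + phiA A (Pi.single i 1) *
              (if s j = 0 then 0 else phiA A (Function.update s j (s j - 1)))))
          + PowerSeries.C (F i) * phiA A s := by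
      rw [pd_mul, pd_alpha x F A hA0 hArec, pd_phiA x F A hArec, add_mul,
        Finset.sum_mul, Finset.mul_sum]
      rw [add_right_comm]
      congr 1
      rw [← Finset.sum_add_distrib]
      refine Finset.sum_congr rfl fun j _ => ?_
      rw [← mul_assoc (phiA A (Pi.single i 1)), hcommC j, mul_assoc, mul_assoc, ← mul_add]
      congr 1
      noncomm_ring
    have lhs_eq : ((l + 1 : ℕ) : ℚ) • PowerSeries.coeff (l + 1)
        (phiA A (Pi.single i 1) * phiA A s) =
        ∑ j, F j * ((PowerSeries.coeff l (phiA A (Pi.single i 1) * phiA A s) * x j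
          - x j * PowerSeries.coeff l (phiA A (Pi.single i 1) * phiA A s))
          + PowerSeries.coeff l (phiA A (Pi.single i 1) *
            (if s j = 0 then 0 else phiA A (Function.update s j (s j - 1)))))
          + F i * PowerSeries.coeff l (phiA A s) := by
      rw [← coeff_pd, hps, map_add, map_sum, PowerSeries.coeff_C_mul]
      congr 1
      refine Finset.sum_congr rfl fun j _ => ?_
      rw [PowerSeries.coeff_C_mul, map_add, map_sub, PowerSeries.coeff_mul_C,
        PowerSeries.coeff_C_mul]
    have rhs_eq : ((l + 1 : ℕ) : ℚ) • (((s i + 1 : ℕ) : ℚ) • PowerSeries.coeff (l + 1)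
        (phiA A (s + (Pi.single i 1 : Fin n → ℕ)))) =
        ((s i + 1 : ℕ) : ℚ) • ∑ j, F j *
          ((PowerSeries.coeff l (phiA A (s + (Pi.single i 1 : Fin n → ℕ))) * x j
            - x j * PowerSeries.coeff l (phiA A (s + (Pi.single i 1 : Fin n → ℕ))))
            + PowerSeries.coeff l
              (if (s + (Pi.single i 1 : Fin n → ℕ)) j = 0 then 0 else
                phiA A (Function.update (s + (Pi.single i 1 : Fin n → ℕ)) j
                  ((s + (Pi.single i 1 : Fin n → ℕ)) j - 1)))) := by
      rw [smul_comm]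
      congr 1
      rw [← coeff_pd, pd_phiA x F A hArec, map_sum]
      refine Finset.sum_congr rfl fun j _ => ?_
      rw [PowerSeries.coeff_C_mul, map_add, map_sub, PowerSeries.coeff_mul_C,
        PowerSeries.coeff_C_mul]
    rw [lhs_eq, rhs_eq, Finset.smul_sum]
    rw [← Finset.sum_erase_add _ _ (Finset.mem_univ i),
      ← Finset.sum_erase_add _ _ (Finset.mem_univ i), add_assoc]
    congr 1
    · -- terms j ≠ i
      refine Finset.sum_congr rfl fun j hj => ?_
      have hji : j ≠ i := Finset.ne_of_mem_erase hj
      have hadd : (s + (Pi.single i 1 : Fin n → ℕ)) j = s j := by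
        simp [Pi.single_eq_of_ne hji]
      rw [ih s i, hadd]
      rcases eq_or_ne (s j) 0 with hsj | hsj
      · simp only [hsj, if_pos rfl, mul_zero, map_zero]
        simp [mul_sub, mul_add, smul_sub, smul_add, mul_smul_comm, smul_mul_assoc, mul_assoc]
      · rw [if_neg hsj, if_neg hsj, ih (Function.update s j (s j - 1)) i]
        have h5 : Function.update s j (s j - 1) i = s i := Function.update_of_ne (Ne.symm hji) _ _
        rw [h5, upd_add_single hji]
        simp [mul_sub, mul_add, smul_sub, smul_add, mul_smul_comm, smul_mul_assoc, mul_assoc,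
          Pi.single_eq_of_ne hji]
    · -- term j = i, with the extra `F i * coeff φ_s`
      have haddi : (s + (Pi.single i 1 : Fin n → ℕ)) i = s i + 1 := by
        simp [Pi.single_eq_same]
      have hupd : Function.update (s + (Pi.single i 1 : Fin n → ℕ)) i (s i + 1 - 1) = s := by
        have h6 := upd_succ_sub s i
        rwa [haddi] at h6
      rw [ih s i, haddi, if_neg (Nat.succ_ne_zero (s i)), hupd]
      rcases eq_or_ne (s i) 0 with hsi | hsi
      · rw [hsi, if_pos rfl]
        simp [mul_sub, mul_add, smul_sub, smul_add, mul_smul_comm, smul_mul_assoc, mul_assoc]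
      · rw [if_neg hsi, ih (Function.update s i (s i - 1)) i, Function.update_self,
          upd_sub_add_single hsi]
        have hnum : (s i - 1 + 1 : ℕ) = s i := Nat.succ_pred_eq_of_pos (Nat.pos_of_ne_zero hsi)
        rw [hnum]
        simp only [mul_sub, mul_add, add_mul, sub_mul, smul_sub, smul_add, mul_smul_comm,
          smul_mul_assoc, mul_assoc, Nat.cast_add, Nat.cast_one, add_smul, one_smul]
        abel
  
end Aux5

section Aux6
variable {R' : Type*} [Ring R'] [Algebra ℚ R'] {n : ℕ}
  (R : Subalgebra ℚ R') (x F : Fin n → R') (A : (Fin n → ℕ) → ℕ → R')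

lemma alpha_prod
    (hRcomm : ∀ a ∈ R, ∀ b ∈ R, a * b = b * a)
    (hF : ∀ i, F i ∈ R)
    (hAmem : ∀ s l, A s l ∈ R)
    (hA0 : A 0 0 = 1)
    (hAinit : ∀ s : Fin n → ℕ, s ≠ 0 → A s 0 = 0)
    (hArec : ∀ (s : Fin n → ℕ) (l : ℕ),
      A s (l + 1) = ∑ i, F i * ((A s l * x i - x i * A s l) +
        if s i = 0 then 0 else A (Function.update s i (s i - 1)) l)) :
    ∀ (k : ℕ) (s : Fin n → ℕ), (∑ j, s j) = k →
      (List.ofFn fun i => (phiA A (Pi.single i 1)) ^ s i).prod =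
        (∏ j, ((s j).factorial : ℚ)) • phiA A s := by
  intro k
  induction k with
  | zero =>
    intro s hs
    have hz : ∀ j, s j = 0 := by
      intro j
      exact (Finset.sum_eq_zero_iff.mp hs) j (Finset.mem_univ j)
    have hs0 : s = 0 := funext hz
    subst hs0
    rw [phiA_zero x F A hA0 hArec]
    have h1 : (List.ofFn fun i => (phiA A (Pi.single i 1)) ^ (0 : Fin n → ℕ) i).prod = 1 := by
      apply List.prod_eq_one
      intro y hy
      rw [List.mem_ofFn] at hy
      obtain ⟨j, rfl⟩ := hy
      simp
    rw [h1]
    simp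
  | succ k ih =>
    intro s hs
    obtain ⟨i, hi⟩ : ∃ i, s i ≠ 0 := by
      by_contra h
      push_neg at h
      rw [Finset.sum_eq_zero fun j _ => h j] at hs
      omega
    have hsl := sum_update_lt s i hi
    set s' := Function.update s i (s i - 1) with hs'def
    have hsum' : (∑ j, s' j) = k := by omega
    have hrepr : s = Function.update s' i (s' i + 1) := by
      funext j
      rcases eq_or_ne j i with rfl | hj
      · simp [hs'def, Function.update_self]
        omega
      · simp [hs'def, Function.update_of_ne hj]
    have hcomm : ∀ a b : Fin n, Commute (phiA A (Pi.single a 1)) (phiA A (Pi.single b 1)) := by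
      intro a b
      exact mul_comm_of_mem R hRcomm _ _ (coeff_phiA_mem R A hAmem _) (coeff_phiA_mem R A hAmem _)
    calc (List.ofFn fun j => (phiA A (Pi.single j 1)) ^ s j).prod
        = (List.ofFn fun j => (phiA A (Pi.single j 1)) ^ (Function.update s' i (s' i + 1)) j).prod := by
          rw [← hrepr]
      _ = phiA A (Pi.single i 1) * (List.ofFn fun j => (phiA A (Pi.single j 1)) ^ s' j).prod :=
          ofFn_pow_update _ hcomm s' i
      _ = phiA A (Pi.single i 1) * ((∏ j, ((s' j).factorial : ℚ)) • phiA A s') := by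
          rw [ih s' hsum']
      _ = (∏ j, ((s' j).factorial : ℚ)) • (phiA A (Pi.single i 1) * phiA A s') := by
          rw [mul_smul_comm]
      _ = (∏ j, ((s' j).factorial : ℚ)) • (((s' i + 1 : ℕ) : ℚ) • phiA A (s' + Pi.single i 1)) := by
          congr 1
          ext l
          rw [PowerSeries.coeff_smul, key R x F A hRcomm hF hAmem hA0 hAinit hArec l s' i]
      _ = (∏ j, ((s j).factorial : ℚ)) • phiA A s := by
          rw [hs'def, upd_sub_add_single hi, smul_smul]
          congr 1
          have h7 : ((s i : ℚ)) * (((s i - 1).factorial : ℚ)) = ((s i).factorial : ℚ) := by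
            exact_mod_cast congrArg (Nat.cast (R := ℚ))
              (Nat.mul_factorial_pred hi)
          have h8 : (Function.update s i (s i - 1) i + 1 : ℕ) = s i := by
            rw [Function.update_self]
            omega
          rw [h8, ← Finset.mul_prod_erase Finset.univ
              (fun j => ((Function.update s i (s i - 1) j).factorial : ℚ)) (Finset.mem_univ i),
            ← Finset.mul_prod_erase Finset.univ (fun j => ((s j).factorial : ℚ))
              (Finset.mem_univ i)]
          have h9 : ∏ j ∈ Finset.univ.erase i, ((Function.update s i (s i - 1) j).factorial : ℚ) =
              ∏ j ∈ Finset.univ.erase i, ((s j).factorial : ℚ) :=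
            Finset.prod_congr rfl fun j hj => by
              rw [Function.update_of_ne (Finset.ne_of_mem_erase hj)]
          rw [h9, Function.update_self, ← h7]
          ring
end Aux6

section Aux7
variable {R' : Type*} [Ring R'] [Algebra ℚ R'] {n : ℕ}
  (R : Subalgebra ℚ R') (x F : Fin n → R') (A : (Fin n → ℕ) → ℕ → R')

/-- product of powers of the `x`'s -/
noncomputable def xpow (x : Fin n → R') (s : Fin n → ℕ) : R' :=
  (List.ofFn fun j => x j ^ s j).prod

lemma xpow_update (hx_comm : ∀ i j, x i * x j = x j * x i) (s : Fin n → ℕ) (i : Fin n) :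
    xpow x s * x i = xpow x (Function.update s i (s i + 1)) := by
  have hc : Commute (x i) ((List.ofFn fun j => x j ^ s j).prod) := by
    apply Commute.list_prod_right
    intro z hz
    rw [List.mem_ofFn] at hz
    obtain ⟨j, rfl⟩ := hz
    exact (Commute.pow_right (hx_comm i j) _)
  rw [xpow, xpow, ← hc.eq, ofFn_pow_update x (fun a b => hx_comm a b) s i]

lemma xpow_zero' : xpow x (0 : Fin n → ℕ) = 1 := by
  apply List.prod_eq_one
  intro y hy
  rw [List.mem_ofFn] at hy
  obtain ⟨j, rfl⟩ := hy
  simp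

lemma reindex_step
    (hx_comm : ∀ i j, x i * x j = x j * x i)
    (hAinit : ∀ s : Fin n → ℕ, s ≠ 0 → A s 0 = 0)
    (hArec : ∀ (s : Fin n → ℕ) (l : ℕ),
      A s (l + 1) = ∑ i, F i * ((A s l * x i - x i * A s l) +
        if s i = 0 then 0 else A (Function.update s i (s i - 1)) l))
    (m : ℕ) (i : Fin n) :
    ∑ s ∈ Fintype.piFinset (fun _ : Fin n => Finset.range (m + 2)),
      xpow x (Function.update s i (s i + 1)) * ((((m.factorial : ℚ)⁻¹) • A s m) * F i) =
    ∑ s ∈ Fintype.piFinset (fun _ : Fin n => Finset.range (m + 2)),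
      xpow x s * ((if s i = 0 then 0 else
        (((m.factorial : ℚ)⁻¹) • A (Function.update s i (s i - 1)) m)) * F i) := by
  set T := Fintype.piFinset (fun _ : Fin n => Finset.range (m + 2)) with hT
  have hmemT : ∀ s : Fin n → ℕ, s ∈ T ↔ ∀ j, s j < m + 2 := by
    intro s
    rw [hT, Fintype.mem_piFinset]
    simp [Finset.mem_range]
  -- restrict both sides to the subsets where the terms do not vanish
  conv_lhs => rw [← Finset.sum_filter_of_ne (p := fun s => s i ≠ m + 1) (fun s hs hne => by
    intro hsi
    apply hne
    have hA : A s m = 0 := by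
      apply A_vanish x F A hAinit hArec
      calc m < m + 1 := Nat.lt_succ_self m
        _ = s i := hsi.symm
        _ ≤ ∑ j', s j' := Finset.single_le_sum (fun _ _ => Nat.zero_le _) (Finset.mem_univ i)
    rw [hA, smul_zero, zero_mul, mul_zero])]
  conv_rhs => rw [← Finset.sum_filter_of_ne (p := fun s => s i ≠ 0) (fun s hs hne => by
    intro hsi
    apply hne
    rw [if_pos hsi, zero_mul, mul_zero])]
  apply Finset.sum_nbij' (fun s => Function.update s i (s i + 1))
    (fun t => Function.update t i (t i - 1))
  · intro s hs
    rw [Finset.mem_filter] at hs ⊢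
    obtain ⟨hsT, hsi⟩ := hs
    constructor
    · rw [hmemT]
      intro j
      rcases eq_or_ne j i with rfl | hj
      · rw [Function.update_self]
        have := (hmemT s).mp hsT j
        omega
      · rw [Function.update_of_ne hj]
        exact (hmemT s).mp hsT j
    · rw [Function.update_self]
      omega
  · intro t ht
    rw [Finset.mem_filter] at ht ⊢
    obtain ⟨htT, hti⟩ := ht
    constructor
    · rw [hmemT]
      intro j
      rcases eq_or_ne j i with rfl | hj
      · rw [Function.update_self]
        have := (hmemT t).mp htT j
        omega
      · rw [Function.update_of_ne hj]
        exact (hmemT t).mp htT j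
    · rw [Function.update_self]
      have := (hmemT t).mp htT i
      omega
  · intro s hs
    rw [Finset.mem_filter] at hs
    funext j
    rcases eq_or_ne j i with rfl | hj
    · rw [Function.update_self, Function.update_self]
      omega
    · rw [Function.update_of_ne hj, Function.update_of_ne hj]
  · intro t ht
    rw [Finset.mem_filter] at ht
    funext j
    rcases eq_or_ne j i with rfl | hj
    · rw [Function.update_self, Function.update_self]
      have := ht.2
      omega
    · rw [Function.update_of_ne hj, Function.update_of_ne hj]
  · intro s hs
    rw [Finset.mem_filter] at hs
    have h1 : Function.update s i (s i + 1) i = s i + 1 := Function.update_self _ _ _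
    rw [if_neg (by rw [h1]; omega)]
    congr 2
    rw [h1, Function.update_idem, Nat.add_sub_cancel, Function.update_eq_self]
end Aux7

section Aux8
variable {R' : Type*} [Ring R'] [Algebra ℚ R'] {n : ℕ}
  (R : Subalgebra ℚ R') (x F : Fin n → R') (A : (Fin n → ℕ) → ℕ → R')

lemma exp_coeff_sum
    (hRcomm : ∀ a ∈ R, ∀ b ∈ R, a * b = b * a)
    (hx_comm : ∀ i j, x i * x j = x j * x i)
    (hF : ∀ i, F i ∈ R)
    (hD : ∀ i, ∀ r ∈ R, r * x i - x i * r ∈ R)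
    (hAmem : ∀ s l, A s l ∈ R)
    (hA0 : A 0 0 = 1)
    (hAinit : ∀ s : Fin n → ℕ, s ≠ 0 → A s 0 = 0)
    (hArec : ∀ (s : Fin n → ℕ) (l : ℕ),
      A s (l + 1) = ∑ i, F i * ((A s l * x i - x i * A s l) +
        if s i = 0 then 0 else A (Function.update s i (s i - 1)) l)) :
    ∀ m : ℕ, ((m.factorial : ℚ)⁻¹) • (∑ i, x i * F i) ^ m =
      ∑ s ∈ Fintype.piFinset (fun _ : Fin n => Finset.range (m + 1)),
        xpow x s * (((m.factorial : ℚ)⁻¹) • A s m) := by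
  intro m
  induction m with
  | zero =>
    rw [Finset.sum_eq_single_of_mem (0 : Fin n → ℕ)]
    · rw [xpow_zero', hA0]
      simp
    · rw [Fintype.mem_piFinset]
      intro j
      simp
    · intro b hb hne
      exfalso
      apply hne
      funext j
      have := Fintype.mem_piFinset.mp hb j
      rw [Finset.mem_range] at this
      have h0 : (0 : Fin n → ℕ) j = 0 := rfl
      omega
  | succ m ih =>
    have hTsub : Fintype.piFinset (fun _ : Fin n => Finset.range (m + 1)) ⊆
        Fintype.piFinset (fun _ : Fin n => Finset.range (m + 2)) := by
      intro s hs
      rw [Fintype.mem_piFinset] at hs ⊢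
      intro j
      have := hs j
      rw [Finset.mem_range] at this ⊢
      omega
    -- extend sum over the bigger box
    have hext : ∑ s ∈ Fintype.piFinset (fun _ : Fin n => Finset.range (m + 1)),
        xpow x s * (((m.factorial : ℚ)⁻¹) • A s m) =
        ∑ s ∈ Fintype.piFinset (fun _ : Fin n => Finset.range (m + 2)),
        xpow x s * (((m.factorial : ℚ)⁻¹) • A s m) := by
      apply Finset.sum_subset hTsub
      intro s hs hns
      obtain ⟨j, hj⟩ : ∃ j, m + 1 ≤ s j := by
        by_contra h
        push_neg at h
        apply hns
        rw [Fintype.mem_piFinset]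
        intro j
        rw [Finset.mem_range]
        have := h j
        omega
      have hA : A s m = 0 := by
        apply A_vanish x F A hAinit hArec
        calc m < m + 1 := Nat.lt_succ_self m
          _ ≤ s j := hj
          _ ≤ ∑ j', s j' := Finset.single_le_sum (fun _ _ => Nat.zero_le _) (Finset.mem_univ j)
      rw [hA]
      simp
    -- main multiplication step
    have hkey : (∑ s ∈ Fintype.piFinset (fun _ : Fin n => Finset.range (m + 2)),
        xpow x s * (((m.factorial : ℚ)⁻¹) • A s m)) * (∑ i, x i * F i) =
        ((m + 1 : ℕ) : ℚ) • ∑ s ∈ Fintype.piFinset (fun _ : Fin n => Finset.range (m + 2)),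
        xpow x s * ((((m + 1).factorial : ℚ)⁻¹) • A s (m + 1)) := by
      rw [Finset.sum_mul]
      have hsplit : ∀ s ∈ Fintype.piFinset (fun _ : Fin n => Finset.range (m + 2)),
          (xpow x s * (((m.factorial : ℚ)⁻¹) • A s m)) * (∑ i, x i * F i) =
          ∑ i, (xpow x (Function.update s i (s i + 1)) * ((((m.factorial : ℚ)⁻¹) • A s m) * F i)
            + xpow x s * (((((m.factorial : ℚ)⁻¹) • A s m) * x i
                - x i * (((m.factorial : ℚ)⁻¹) • A s m)) * F i)) := by
        intro s _
        rw [Finset.mul_sum]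
        refine Finset.sum_congr rfl fun i _ => ?_
        rw [← xpow_update x hx_comm s i]
        noncomm_ring
      rw [Finset.sum_congr rfl hsplit, Finset.sum_comm]
      have hswap : ∀ i : Fin n, ∑ s ∈ Fintype.piFinset (fun _ : Fin n => Finset.range (m + 2)),
          (xpow x (Function.update s i (s i + 1)) * ((((m.factorial : ℚ)⁻¹) • A s m) * F i)
            + xpow x s * (((((m.factorial : ℚ)⁻¹) • A s m) * x i
                - x i * (((m.factorial : ℚ)⁻¹) • A s m)) * F i)) =
          ∑ s ∈ Fintype.piFinset (fun _ : Fin n => Finset.range (m + 2)),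
          (xpow x s * ((if s i = 0 then 0 else
              (((m.factorial : ℚ)⁻¹) • A (Function.update s i (s i - 1)) m)) * F i)
            + xpow x s * (((((m.factorial : ℚ)⁻¹) • A s m) * x i
                - x i * (((m.factorial : ℚ)⁻¹) • A s m)) * F i)) := by
        intro i
        rw [Finset.sum_add_distrib, Finset.sum_add_distrib,
          reindex_step x F A hx_comm hAinit hArec m i]
      rw [Finset.sum_congr rfl fun i _ => hswap i, Finset.sum_comm]
      rw [Finset.smul_sum]
      refine Finset.sum_congr rfl fun s _ => ?_
      -- per-s computation using `hArec` and commutativity in `R`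
      have hmem1 : ((m.factorial : ℚ)⁻¹) • A s m ∈ R := R.smul_mem (hAmem s m) _
      have hcollect : ∑ i, (xpow x s * ((if s i = 0 then 0 else
            (((m.factorial : ℚ)⁻¹) • A (Function.update s i (s i - 1)) m)) * F i)
          + xpow x s * (((((m.factorial : ℚ)⁻¹) • A s m) * x i
              - x i * (((m.factorial : ℚ)⁻¹) • A s m)) * F i)) =
          xpow x s * (∑ i, (((((m.factorial : ℚ)⁻¹) • A s m) * x i
              - x i * (((m.factorial : ℚ)⁻¹) • A s m)
            + if s i = 0 then 0 else
              (((m.factorial : ℚ)⁻¹) • A (Function.update s i (s i - 1)) m)) * F i)) := by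
        rw [Finset.mul_sum]
        refine Finset.sum_congr rfl fun i _ => ?_
        rw [add_mul, mul_add]
        abel
      rw [hcollect]
      have hperi : ∀ i : Fin n, (((((m.factorial : ℚ)⁻¹) • A s m) * x i
              - x i * (((m.factorial : ℚ)⁻¹) • A s m)
            + if s i = 0 then 0 else
              (((m.factorial : ℚ)⁻¹) • A (Function.update s i (s i - 1)) m)) * F i) =
          ((m.factorial : ℚ)⁻¹) • (F i * ((A s m * x i - x i * A s m)
            + if s i = 0 then 0 else A (Function.update s i (s i - 1)) m)) := by
        intro i
        have hmemD : (((m.factorial : ℚ)⁻¹) • A s m) * x i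
            - x i * (((m.factorial : ℚ)⁻¹) • A s m) ∈ R := hD i _ hmem1
        have hmemI : (if s i = 0 then (0 : R') else
            (((m.factorial : ℚ)⁻¹) • A (Function.update s i (s i - 1)) m)) ∈ R := by
          split
          · exact R.zero_mem
          · exact R.smul_mem (hAmem _ m) _
        rw [← hRcomm _ (hF i) _ (R.add_mem hmemD hmemI)]
        have hsub : (((m.factorial : ℚ)⁻¹) • A s m) * x i - x i * (((m.factorial : ℚ)⁻¹) • A s m)
            = ((m.factorial : ℚ)⁻¹) • (A s m * x i - x i * A s m) := by
          rw [smul_sub, smul_mul_assoc, mul_smul_comm]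
        rw [hsub, mul_add, mul_add, mul_smul_comm, smul_add]
        congr 1
        split
        · simp
        · rw [mul_smul_comm]
      rw [Finset.sum_congr rfl fun i _ => hperi i, ← Finset.smul_sum, ← hArec s m]
      rw [mul_smul_comm, mul_smul_comm, smul_smul]
      congr 1
      rw [Nat.factorial_succ, Nat.cast_mul, mul_inv, ← mul_assoc,
        mul_inv_cancel₀ (Nat.cast_ne_zero.mpr (Nat.succ_ne_zero m)), one_mul]
    -- put everything together
    rw [pow_succ, Nat.factorial_succ, Nat.cast_mul, mul_inv, mul_smul, ← smul_mul_assoc,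
      ih, hext, hkey, smul_smul,
      inv_mul_cancel₀ (Nat.cast_ne_zero.mpr (Nat.succ_ne_zero m)), one_smul]
    refine Finset.sum_congr rfl fun s _ => ?_
    rw [Nat.factorial_succ, Nat.cast_mul, mul_inv]
end Aux8

/-- Multivariable exponential formula.  In `R'⟦λ⟧` one has
`exp(λ ∑ᵢ xᵢFᵢ) = ∑_{s₁,…,s_n ≥ 0} x₁^{s₁}⋯x_n^{s_n} α₁^{s₁}⋯α_n^{s_n} / (s₁!⋯s_n!)`,
where `exp(λ ∑ xᵢFᵢ) := ∑_k (∑ᵢ xᵢFᵢ)^k λ^k / k!` and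
`αᵢ := ∑_{l≥1} A (eᵢ) l · λ^l / l!` (`eᵢ` the `i`-th standard basis vector).
The right-hand sum converges coefficientwise since each `αᵢ` has zero constant term: the
`m`-th coefficient of the term indexed by `(s₁,…,s_n)` vanishes whenever `∑ᵢ sᵢ > m` (second
conjunct), so only finitely many terms contribute to each coefficient (first conjunct). -/
theorem statement7 {R' : Type*} [Ring R'] [Algebra ℚ R'] (R : Subalgebra ℚ R')
    (hRcomm : ∀ a ∈ R, ∀ b ∈ R, a * b = b * a)
    {n : ℕ} (x F : Fin n → R')
    (hx_comm : ∀ i j, x i * x j = x j * x i)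
    (hF : ∀ i, F i ∈ R)
    (hD : ∀ i, ∀ r ∈ R, r * x i - x i * r ∈ R)
    (hD_comm : ∀ i j, ∀ r ∈ R,
      (r * x j - x j * r) * x i - x i * (r * x j - x j * r) =
      (r * x i - x i * r) * x j - x j * (r * x i - x i * r))
    (A : (Fin n → ℕ) → ℕ → R')
    (hAmem : ∀ s l, A s l ∈ R)
    (hA0 : A 0 0 = 1)
    (hAinit : ∀ s : Fin n → ℕ, s ≠ 0 → A s 0 = 0)
    (hArec : ∀ (s : Fin n → ℕ) (l : ℕ),
      A s (l + 1) = ∑ i, F i * ((A s l * x i - x i * A s l) +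
        if s i = 0 then 0 else A (Function.update s i (s i - 1)) l))
    (α : Fin n → PowerSeries R')
    (hα : ∀ i, α i = PowerSeries.mk fun l =>
      if l = 0 then 0 else ((l.factorial : ℚ)⁻¹) • A (Pi.single i 1) l)
    (expSum : PowerSeries R')
    (hexp : expSum = PowerSeries.mk fun k => ((k.factorial : ℚ)⁻¹) • (∑ i, x i * F i) ^ k)
    (term : (Fin n → ℕ) → PowerSeries R')
    (hterm : ∀ sv : Fin n → ℕ, term sv =
      ((∏ i, ((sv i).factorial : ℚ))⁻¹) •
        ((List.ofFn fun i => (PowerSeries.C (x i)) ^ sv i).prod *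
         (List.ofFn fun i => (α i) ^ sv i).prod))
    (m : ℕ) :
    PowerSeries.coeff m expSum =
      ∑ sv ∈ Fintype.piFinset (fun _ : Fin n => Finset.range (m + 1)),
        PowerSeries.coeff m (term sv) ∧
    ∀ sv : Fin n → ℕ, m < ∑ i, sv i → PowerSeries.coeff m (term sv) = 0 := by
  have hαphi : ∀ i, α i = phiA A (Pi.single i 1) := by
    intro i
    rw [hα i]
    ext l
    rw [PowerSeries.coeff_mk, coeff_phiA]
    rcases Nat.eq_zero_or_pos l with rfl | hl
    · rw [if_pos rfl, hAinit _ (single_ne_zero' i)]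
      simp
    · rw [if_neg (by omega)]
  have hterm_coeff : ∀ sv : Fin n → ℕ,
      PowerSeries.coeff m (term sv) = xpow x sv * (((m.factorial : ℚ)⁻¹) • A sv m) := by
    intro sv
    have hC : (List.ofFn fun i => (PowerSeries.C (x i)) ^ sv i).prod =
        PowerSeries.C (xpow x sv) := by
      have hfun : (fun i => (PowerSeries.C (x i)) ^ sv i) =
          (⇑(PowerSeries.C (R := R')) ∘ fun j => x j ^ sv j) := by
        funext i
        simp [Function.comp, map_pow]
      rw [xpow, map_list_prod, List.map_ofFn, hfun]
    have hαp : (List.ofFn fun i => (α i) ^ sv i).prod =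
        (∏ j, ((sv j).factorial : ℚ)) • phiA A sv := by
      have h1 : (List.ofFn fun i => (α i) ^ sv i) =
          (List.ofFn fun i => (phiA A (Pi.single i 1)) ^ sv i) := by
        congr 1
        funext i
        rw [hαphi i]
      rw [h1]
      exact alpha_prod R x F A hRcomm hF hAmem hA0 hAinit hArec (∑ j, sv j) sv rfl
    have hprodne : (∏ j, ((sv j).factorial : ℚ)) ≠ 0 := by
      apply Finset.prod_ne_zero_iff.mpr
      intro j _
      exact Nat.cast_ne_zero.mpr (Nat.factorial_ne_zero _)
    rw [hterm sv, hC, hαp, PowerSeries.coeff_smul, mul_smul_comm, PowerSeries.coeff_smul,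
      PowerSeries.coeff_C_mul, coeff_phiA, smul_smul, inv_mul_cancel₀ hprodne, one_smul,
      mul_smul_comm]
  constructor
  · rw [hexp, PowerSeries.coeff_mk]
    rw [exp_coeff_sum R x F A hRcomm hx_comm hF hD hAmem hA0 hAinit hArec m]
    exact Finset.sum_congr rfl fun sv _ => (hterm_coeff sv).symm
  · intro sv hsv
    rw [hterm_coeff sv, A_vanish x F A hAinit hArec m sv hsv]
    simp
end

section
/- For every integer l ≥ 2 and all real numbers k, x with (l−1)|k|^{l−1} < 1, the double series Σ_{m=0}^∞ Σ_{j=0}^∞ (Π_{i=0}^{j−1} (m + i(l−1))) · k^{m+j(l−1)} · x^m / (j! · m!) converges absolutely, and its sum equals exp( k·x / (1 − (l−1)k^{l−1})^{1/(l−1)} ). (This is the identity e^{x (d/dx)^l} e^{kx} = exp( kx (1 − (l−1)k^{l−1})^{−1/(l−1)} ) of the paper, written out termwise.) -/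
open Finset Filter Real Set

noncomputable def Pasc (a : ℝ) (j : ℕ) : ℝ := ∏ i ∈ Finset.range j, (a + i)

lemma Pasc_zero (a : ℝ) : Pasc a 0 = 1 := by simp [Pasc]

lemma Pasc_succ (a : ℝ) (j : ℕ) : Pasc a (j+1) = Pasc a j * (a + j) :=
  Finset.prod_range_succ _ _

lemma Pasc_succ' (a : ℝ) (j : ℕ) : Pasc a (j+1) = a * Pasc (a+1) j := by
  rw [Pasc, Finset.prod_range_succ']
  simp only [Nat.cast_zero, add_zero]
  rw [mul_comm, Pasc]
  congr 1
  refine Finset.prod_congr rfl fun i _ => ?_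
  push_cast; ring

lemma Pasc_nonneg {a : ℝ} (ha : 0 ≤ a) (j : ℕ) : 0 ≤ Pasc a j :=
  Finset.prod_nonneg fun i _ => by positivity

/-- Summability of the binomial-type series. -/
lemma summable_Pasc (a : ℝ) (ha : 0 ≤ a) {r : ℝ} (hr : |r| < 1) :
    Summable (fun j => Pasc a j * r ^ j / j.factorial) := by
  set c : ℝ := (1 + |r|) / 2 with hc
  have hrc : |r| < c := by rw [hc]; linarith
  have hc1 : c < 1 := by rw [hc]; linarith
  have hc0 : 0 ≤ c := by positivity
  obtain ⟨N, hN⟩ := exists_nat_ge (a * |r| / (c - |r|))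
  refine summable_of_ratio_norm_eventually_le hc1 ?_
  filter_upwards [eventually_ge_atTop N] with j hj
  have hjN : (N : ℝ) ≤ j := by exact_mod_cast hj
  have hkey : (a + j) * |r| ≤ c * (j + 1) := by
    have h1 : a * |r| / (c - |r|) ≤ (j : ℝ) := le_trans hN hjN
    have h2 : a * |r| ≤ (j : ℝ) * (c - |r|) := by
      rw [div_le_iff₀ (by linarith)] at h1; linarith
    nlinarith [abs_nonneg r, (Nat.cast_nonneg j : (0:ℝ) ≤ j)]
  have hP := Pasc_nonneg ha j
  have hfact : ((j+1).factorial : ℝ) = (j+1) * j.factorial := by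
    push_cast [Nat.factorial_succ]; ring
  rw [Real.norm_eq_abs, Real.norm_eq_abs, Pasc_succ, abs_div, abs_div, abs_mul, abs_mul,
    abs_mul, abs_pow, abs_pow, pow_succ, hfact]
  rw [abs_of_nonneg hP, abs_of_nonneg (by positivity : (0:ℝ) ≤ a + j)]
  rw [abs_of_nonneg (by positivity : (0:ℝ) ≤ ((j:ℝ)+1)*(j.factorial:ℝ))]
  rw [abs_of_nonneg (by positivity : (0:ℝ) ≤ (j.factorial:ℝ))]
  have hfp : (0:ℝ) < j.factorial := by exact_mod_cast j.factorial_pos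
  rw [div_le_iff₀ (by positivity)]
  have h3 : c * (Pasc a j * |r| ^ j / (j.factorial:ℝ)) * (((j:ℝ) + 1) * (j.factorial:ℝ))
      = Pasc a j * |r| ^ j * (c * ((j:ℝ) + 1)) := by field_simp
  rw [h3]
  calc Pasc a j * (a + (j:ℝ)) * (|r| ^ j * |r|) = Pasc a j * |r| ^ j * ((a + (j:ℝ)) * |r|) := by
        ring
    _ ≤ Pasc a j * |r| ^ j * (c * ((j:ℝ) + 1)) :=
        mul_le_mul_of_nonneg_left hkey (mul_nonneg hP (pow_nonneg (abs_nonneg r) j))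


/-- The generalized binomial series: `∑ j, (a)_j z^j / j! = (1-z)^(-a)`. -/
lemma hasSum_binomial (a : ℝ) (ha : 0 ≤ a) {z : ℝ} (hz : |z| < 1) :
    HasSum (fun j => Pasc a j * z ^ j / j.factorial) ((1 - z) ^ (-a)) := by
  set r : ℝ := (1 + |z|) / 2 with hrdef
  have hzr : |z| < r := by rw [hrdef]; linarith
  have hr1 : r < 1 := by rw [hrdef]; linarith
  have hr0 : 0 < r := by positivity
  have hrabs : |r| < 1 := by rw [abs_of_nonneg hr0.le]; exact hr1
  have hto : IsOpen (Set.Ioo (-r) r) := isOpen_Ioo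
  have htc : IsPreconnected (Set.Ioo (-r) r) := (convex_Ioo _ _).isPreconnected
  have hmem : ∀ {y : ℝ}, |y| < r → y ∈ Set.Ioo (-r) r := fun hy => abs_lt.1 hy
  have hmem' : ∀ {y : ℝ}, y ∈ Set.Ioo (-r) r → |y| < r := fun hy => abs_lt.2 hy
  have hfacteq : ∀ j : ℕ, ((j+1).factorial : ℝ) = (j+1) * j.factorial := by
    intro j; push_cast [Nat.factorial_succ]; ring
  have hfp : ∀ j : ℕ, (0:ℝ) < j.factorial := fun j => by exact_mod_cast j.factorial_pos
  have hderiv : ∀ (j : ℕ) (y : ℝ),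
      HasDerivAt (fun w => Pasc a j * w ^ j / j.factorial)
        (Pasc a j * ((j:ℝ) * y ^ (j-1)) / j.factorial) y := fun j y =>
    ((hasDerivAt_pow j y).const_mul (Pasc a j)).div_const _
  have hbound : ∀ (j : ℕ), ∀ y ∈ Set.Ioo (-r) r,
      ‖Pasc a j * ((j:ℝ) * y ^ (j-1)) / j.factorial‖ ≤
        Pasc a j * ((j:ℝ) * r ^ (j-1)) / j.factorial := by
    intro j y hy
    have hyr : |y| ≤ r := (hmem' hy).le
    have hP := Pasc_nonneg ha j
    rw [Real.norm_eq_abs, abs_div, abs_mul, abs_mul, abs_pow,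
      abs_of_nonneg hP, Nat.abs_cast, Nat.abs_cast]
    have h1 : Pasc a j * ((j:ℝ) * |y|^(j-1)) ≤ Pasc a j * ((j:ℝ) * r^(j-1)) := by
      refine mul_le_mul_of_nonneg_left ?_ hP
      exact mul_le_mul_of_nonneg_left (pow_le_pow_left₀ (abs_nonneg y) hyr _) (Nat.cast_nonneg j)
    exact div_le_div₀ (by positivity) h1 (hfp j) le_rfl
  have hU1 : Summable (fun j : ℕ => Pasc a (j+1) * (((j:ℝ)+1) * r ^ j) / (j+1).factorial) := by
    have h := (summable_Pasc (a+1) (by linarith) hrabs).mul_left a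
    refine h.congr fun j => ?_
    rw [Pasc_succ', hfacteq j]
    field_simp
  have hU : Summable (fun j : ℕ => Pasc a j * ((j:ℝ) * r ^ (j-1)) / j.factorial) := by
    refine (summable_nat_add_iff 1).1 (hU1.congr fun j => ?_)
    simp only [Nat.add_sub_cancel]
    push_cast
    ring_nf
  have hsum_at : ∀ {y : ℝ}, |y| < 1 → Summable (fun j => Pasc a j * y ^ j / j.factorial) :=
    fun hy => summable_Pasc a ha hy
  have h0t : (0:ℝ) ∈ Set.Ioo (-r) r := hmem (by simpa using hr0)
  have hzt : z ∈ Set.Ioo (-r) r := hmem hzr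
  have hFderiv : ∀ y ∈ Set.Ioo (-r) r,
      HasDerivAt (fun w => ∑' j, Pasc a j * w ^ j / j.factorial)
        (∑' j, Pasc a j * ((j:ℝ) * y ^ (j-1)) / j.factorial) y := fun y hy =>
    hasDerivAt_tsum_of_isPreconnected hU hto htc (fun j y' _ => hderiv j y')
      hbound h0t (hsum_at (by simpa using zero_lt_one)) hy
  have key : ∀ y ∈ Set.Ioo (-r) r,
      (1 - y) * (∑' j, Pasc a j * ((j:ℝ) * y ^ (j-1)) / j.factorial) =
        a * ∑' j, Pasc a j * y ^ j / j.factorial := by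
    intro y hy
    have hy1 : |y| < 1 := (hmem' hy).trans hr1
    have hS : HasSum (fun j => Pasc a j * y ^ j / j.factorial)
        (∑' j, Pasc a j * y ^ j / j.factorial) := (hsum_at hy1).hasSum
    have hDsum : Summable (fun j => Pasc a j * ((j:ℝ) * y ^ (j-1)) / j.factorial) :=
      Summable.of_norm_bounded hU (fun j => hbound j y hy)
    have hD : HasSum (fun j => Pasc a j * ((j:ℝ) * y ^ (j-1)) / j.factorial)
        (∑' j, Pasc a j * ((j:ℝ) * y ^ (j-1)) / j.factorial) := hDsum.hasSum
    have hA : HasSum (fun j => Pasc a (j+1) * y ^ j / j.factorial)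
        (∑' j, Pasc a j * ((j:ℝ) * y ^ (j-1)) / j.factorial) := by
      have hshift : HasSum
          (fun j : ℕ => Pasc a (j+1) * (((j+1 : ℕ):ℝ) * y ^ (j+1-1)) / ((j+1).factorial:ℝ))
          (∑' j, Pasc a j * ((j:ℝ) * y ^ (j-1)) / j.factorial) := by
        refine (hasSum_nat_add_iff
          (f := fun j => Pasc a j * ((j:ℝ) * y ^ (j-1)) / j.factorial) 1).2 ?_
        simpa using hD
      refine hshift.congr_fun fun j => ?_
      simp only [Nat.add_sub_cancel]
      rw [hfacteq j]
      have := hfp j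
      push_cast
      field_simp
    have hB : HasSum (fun j : ℕ => (j:ℝ) * (Pasc a j * y ^ j / j.factorial))
        (y * ∑' j, Pasc a j * ((j:ℝ) * y ^ (j-1)) / j.factorial) := by
      refine (hD.mul_left y).congr_fun fun j => ?_
      match j with
      | 0 => simp
      | (n+1) => simp only [Nat.add_sub_cancel]; push_cast; ring
    have hAB : HasSum (fun j : ℕ => a * (Pasc a j * y ^ j / j.factorial))
        ((∑' j, Pasc a j * ((j:ℝ) * y ^ (j-1)) / j.factorial) -
          y * ∑' j, Pasc a j * ((j:ℝ) * y ^ (j-1)) / j.factorial) := by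
      refine (hA.sub hB).congr_fun fun j => ?_
      rw [Pasc_succ]
      push_cast
      ring
    have h5 := hAB.unique (hS.mul_left a)
    linear_combination h5
  have hGderiv : ∀ y ∈ Set.Ioo (-r) r,
      HasDerivAt (fun w => (1 - w) ^ a * ∑' j, Pasc a j * w ^ j / j.factorial) 0 y := by
    intro y hy
    have hy1 : (0:ℝ) < 1 - y := by have := (hmem' hy).trans hr1; rw [abs_lt] at this; linarith
    have h1 : HasDerivAt (fun w : ℝ => 1 - w) (-1) y := (hasDerivAt_id y).const_sub 1
    have h2 : HasDerivAt (fun w : ℝ => (1 - w) ^ a) (a * (1 - y) ^ (a - 1) * (-1)) y := by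
      exact
        (Real.hasDerivAt_rpow_const (x := 1 - y) (p := a) (Or.inl hy1.ne')).comp y h1
    have h3 := h2.mul (hFderiv y hy)
    have hsplit : (1 - y) ^ a = (1 - y) ^ (a - 1) * (1 - y) := by
      have h4 : (1 - y) ^ (a-1) * (1 - y) ^ (1:ℝ) = (1 - y) ^ a := by
        rw [← Real.rpow_add hy1]; norm_num
      rw [← h4, Real.rpow_one]
    have hexp : a * (1 - y) ^ (a - 1) * (-1) * (∑' j, Pasc a j * y ^ j / j.factorial) +
        (1 - y) ^ a * (∑' j, Pasc a j * ((j:ℝ) * y ^ (j-1)) / j.factorial) = 0 := by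
      rw [hsplit]
      have hk := key y hy
      linear_combination ((1 - y) ^ (a-1)) * hk
    rw [hexp] at h3
    exact h3
  have hG0 : (∑' j, Pasc a j * (0:ℝ) ^ j / j.factorial) = 1 := by
    have hs0 : HasSum (fun j => Pasc a j * (0:ℝ) ^ j / j.factorial) 1 := by
      have h : HasSum (fun j => Pasc a j * (0:ℝ) ^ j / j.factorial)
          (Pasc a 0 * (0:ℝ) ^ 0 / (Nat.factorial 0)) := by
        refine hasSum_single 0 fun j hj => ?_
        match j with
        | 0 => exact absurd rfl hj
        | (n+1) => simp
      simpa [Pasc_zero] using h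
    exact hs0.tsum_eq
  have hGz : (1 - z) ^ a * (∑' j, Pasc a j * z ^ j / j.factorial) = 1 := by
    rcases le_or_gt 0 z with h0z | h0z
    · have hsub : Set.Icc (0:ℝ) z ⊆ Set.Ioo (-r) r := fun y hy => by
        refine hmem ?_
        rw [abs_lt]
        have h1 := hy.1; have h2 := hy.2
        have h3 : z ≤ |z| := le_abs_self z
        constructor <;> linarith
      have hcont : ContinuousOn
          (fun w => (1 - w) ^ a * ∑' j, Pasc a j * w ^ j / j.factorial) (Set.Icc 0 z) :=
        fun y hy => ((hGderiv y (hsub hy)).continuousAt).continuousWithinAt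
      have hd : ∀ y ∈ Set.Ico (0:ℝ) z, HasDerivWithinAt
          (fun w => (1 - w) ^ a * ∑' j, Pasc a j * w ^ j / j.factorial) 0 (Set.Ici y) y :=
        fun y hy => (hGderiv y (hsub ⟨hy.1, hy.2.le⟩)).hasDerivWithinAt
      have hcc := constant_of_has_deriv_right_zero hcont hd z (Set.right_mem_Icc.2 h0z)
      simpa [hG0] using hcc
    · have hsub : Set.Icc z (0:ℝ) ⊆ Set.Ioo (-r) r := fun y hy => by
        refine hmem ?_
        rw [abs_lt]
        have h1 := hy.1; have h2 := hy.2
        have h3 : -|z| ≤ z := neg_abs_le z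
        constructor <;> linarith
      have hcont : ContinuousOn
          (fun w => (1 - w) ^ a * ∑' j, Pasc a j * w ^ j / j.factorial) (Set.Icc z 0) :=
        fun y hy => ((hGderiv y (hsub hy)).continuousAt).continuousWithinAt
      have hd : ∀ y ∈ Set.Ico z (0:ℝ), HasDerivWithinAt
          (fun w => (1 - w) ^ a * ∑' j, Pasc a j * w ^ j / j.factorial) 0 (Set.Ici y) y :=
        fun y hy => (hGderiv y (hsub ⟨hy.1, hy.2.le⟩)).hasDerivWithinAt
      have hcc := constant_of_has_deriv_right_zero hcont hd 0 (Set.right_mem_Icc.2 h0z.le)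
      rw [← hcc]
      simp [hG0]
  have hz1 : (0:ℝ) < 1 - z := by rw [abs_lt] at hz; linarith
  have hne : (0:ℝ) < (1 - z) ^ a := Real.rpow_pos_of_pos hz1 a
  have hFz : (∑' j, Pasc a j * z ^ j / j.factorial) = (1 - z) ^ (-a) := by
    rw [Real.rpow_neg hz1.le]
    exact eq_inv_of_mul_eq_one_left (by rw [mul_comm]; exact hGz)
  have hfinal : HasSum (fun j => Pasc a j * z ^ j / j.factorial)
      (∑' j, Pasc a j * z ^ j / j.factorial) := (hsum_at (hzr.trans hr1)).hasSum
  rw [hFz] at hfinal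
  exact hfinal

lemma exp_step (q : ℕ) {w : ℝ} (hw : |w| < 1) (v : ℝ) :
    HasSum (fun m : ℕ => (1 - w) ^ (-((m:ℝ)/(q:ℝ))) * (v ^ m / m.factorial))
      (Real.exp (v / (1 - w) ^ ((1:ℝ)/(q:ℝ)))) := by
  have hw1 : 0 < 1 - w := by rw [abs_lt] at hw; linarith
  have hcpos : 0 < (1 - w) ^ ((1:ℝ)/(q:ℝ)) := Real.rpow_pos_of_pos hw1 _
  have hexp : HasSum (fun m : ℕ => (v / (1 - w) ^ ((1:ℝ)/(q:ℝ))) ^ m / m.factorial)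
      (Real.exp (v / (1 - w) ^ ((1:ℝ)/(q:ℝ)))) := by
    rw [Real.exp_eq_exp_ℝ]
    exact NormedSpace.expSeries_div_hasSum_exp _
  refine hexp.congr_fun fun m => ?_
  have h1 : -((m:ℝ)/(q:ℝ)) = ((1:ℝ)/(q:ℝ)) * (-(m:ℝ)) := by ring
  rw [h1, Real.rpow_mul hw1.le, Real.rpow_neg hcpos.le, Real.rpow_natCast, div_pow]
  field_simp

lemma term_eq (q : ℕ) (hq : 1 ≤ q) (k x : ℝ) (m j : ℕ) :
    (∏ i ∈ Finset.range j, ((m:ℝ) + (i:ℝ)*(q:ℝ))) * k ^ (m + j*q) * x ^ m /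
      ((j.factorial:ℝ) * (m.factorial:ℝ))
    = (Pasc ((m:ℝ)/(q:ℝ)) j * ((q:ℝ) * k ^ q) ^ j / j.factorial) *
        ((k*x) ^ m / m.factorial) := by
  have hq0 : (0:ℝ) < q := by exact_mod_cast hq
  have hprod : (∏ i ∈ Finset.range j, ((m:ℝ) + (i:ℝ)*(q:ℝ)))
      = (q:ℝ)^j * Pasc ((m:ℝ)/(q:ℝ)) j := by
    have hcg : ∀ i ∈ Finset.range j, (m:ℝ) + (i:ℝ)*(q:ℝ)
        = (q:ℝ) * (((m:ℝ)/(q:ℝ)) + i) := by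
      intro i _; field_simp
    rw [Finset.prod_congr rfl hcg, Finset.prod_mul_distrib, Finset.prod_const,
      Finset.card_range, Pasc]
  rw [hprod, pow_add, mul_comm j q, pow_mul, mul_pow]
  ring

/-- For `l ≥ 2` and real `k`, `x` with `(l-1)|k|^{l-1} < 1`, the double
series `∑_{m,j} (∏_{i=0}^{j-1} (m + i(l-1))) k^{m+j(l-1)} x^m / (j! m!)` converges absolutely
and its sum equals `exp(kx / (1 - (l-1)k^{l-1})^{1/(l-1)})`.  This is the identity
`e^{x (d/dx)^l} e^{kx} = exp(kx (1 - (l-1)k^{l-1})^{-1/(l-1)})` written out termwise. -/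
theorem statement11 (l : ℕ) (hl : 2 ≤ l) (k x : ℝ)
    (hk : ((l : ℝ) - 1) * |k| ^ (l - 1) < 1) :
    Summable (fun p : ℕ × ℕ =>
      |(∏ i ∈ Finset.range p.2, ((p.1 : ℝ) + (i : ℝ) * ((l : ℝ) - 1))) *
        k ^ (p.1 + p.2 * (l - 1)) * x ^ p.1 /
        ((p.2.factorial : ℝ) * (p.1.factorial : ℝ))|) ∧
    ∑' p : ℕ × ℕ,
        (∏ i ∈ Finset.range p.2, ((p.1 : ℝ) + (i : ℝ) * ((l : ℝ) - 1))) *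
          k ^ (p.1 + p.2 * (l - 1)) * x ^ p.1 /
          ((p.2.factorial : ℝ) * (p.1.factorial : ℝ)) =
      Real.exp (k * x / (1 - ((l : ℝ) - 1) * k ^ (l - 1)) ^ ((1 : ℝ) / ((l : ℝ) - 1))) := by
  set q := l - 1 with hqdef
  have hq1 : 1 ≤ q := by omega
  have hlq : l = q + 1 := by omega
  have hcast : ((l:ℝ) - 1) = (q:ℝ) := by rw [hlq]; push_cast; ring
  have hq0 : (0:ℝ) < q := by exact_mod_cast hq1
  simp only [hcast] at hk ⊢
  set z := (q:ℝ) * k ^ q with hzdef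
  have hzabs : |z| < 1 := by
    rw [hzdef, abs_mul, abs_pow, abs_of_nonneg (le_of_lt hq0)]
    exact hk
  have hzabs' : |(|z|)| < 1 := by rwa [abs_abs]
  have hterm : ∀ p : ℕ × ℕ,
      (∏ i ∈ Finset.range p.2, ((p.1:ℝ) + (i:ℝ)*(q:ℝ))) * k ^ (p.1 + p.2*q) * x ^ p.1 /
        ((p.2.factorial:ℝ) * (p.1.factorial:ℝ))
      = (Pasc ((p.1:ℝ)/(q:ℝ)) p.2 * z ^ p.2 / p.2.factorial) *
          ((k*x) ^ p.1 / p.1.factorial) := fun p => term_eq q hq1 k x p.1 p.2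
  have ha : ∀ m : ℕ, (0:ℝ) ≤ (m:ℝ)/(q:ℝ) := fun m => by positivity
  have habs : ∀ p : ℕ × ℕ,
      |(Pasc ((p.1:ℝ)/(q:ℝ)) p.2 * z ^ p.2 / p.2.factorial) *
          ((k*x) ^ p.1 / p.1.factorial)|
      = (Pasc ((p.1:ℝ)/(q:ℝ)) p.2 * |z| ^ p.2 / p.2.factorial) *
          (|k*x| ^ p.1 / p.1.factorial) := by
    intro p
    rw [abs_mul, abs_div, abs_div, abs_mul, abs_pow, abs_pow,
      abs_of_nonneg (Pasc_nonneg (ha p.1) p.2), Nat.abs_cast, Nat.abs_cast]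
  -- summability of absolute values
  have hinner_abs : ∀ m : ℕ, Summable (fun j : ℕ =>
      (Pasc ((m:ℝ)/(q:ℝ)) j * |z| ^ j / j.factorial) * (|k*x| ^ m / m.factorial)) :=
    fun m => (summable_Pasc _ (ha m) hzabs').mul_right _
  have hinner_hs : ∀ m : ℕ, HasSum (fun j : ℕ =>
      (Pasc ((m:ℝ)/(q:ℝ)) j * |z| ^ j / j.factorial) * (|k*x| ^ m / m.factorial))
      ((1 - |z|) ^ (-((m:ℝ)/(q:ℝ))) * (|k*x| ^ m / m.factorial)) :=
    fun m => (hasSum_binomial _ (ha m) hzabs').mul_right _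
  have houter_abs : Summable (fun m : ℕ =>
      (1 - |z|) ^ (-((m:ℝ)/(q:ℝ))) * (|k*x| ^ m / m.factorial)) :=
    (exp_step q hzabs' |k*x|).summable
  have part1 : Summable (fun p : ℕ × ℕ =>
      |(∏ i ∈ Finset.range p.2, ((p.1:ℝ) + (i:ℝ)*(q:ℝ))) * k ^ (p.1 + p.2*q) * x ^ p.1 /
        ((p.2.factorial:ℝ) * (p.1.factorial:ℝ))|) := by
    simp only [hterm, habs]
    refine (summable_prod_of_nonneg ?_).2 ⟨fun m => ?_, ?_⟩
    · intro p
      exact mul_nonneg (div_nonneg (mul_nonneg (Pasc_nonneg (ha p.1) p.2)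
        (pow_nonneg (abs_nonneg z) _)) (Nat.cast_nonneg _))
        (div_nonneg (pow_nonneg (abs_nonneg _) _) (Nat.cast_nonneg _))
    · exact hinner_abs m
    · refine houter_abs.congr fun m => ?_
      exact ((hinner_hs m).tsum_eq).symm
  refine ⟨part1, ?_⟩
  -- the sum
  have part1' : Summable (fun p : ℕ × ℕ =>
      (∏ i ∈ Finset.range p.2, ((p.1:ℝ) + (i:ℝ)*(q:ℝ))) * k ^ (p.1 + p.2*q) * x ^ p.1 /
        ((p.2.factorial:ℝ) * (p.1.factorial:ℝ))) := summable_abs_iff.mp part1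
  have hinner_sum : ∀ m : ℕ, Summable (fun j : ℕ =>
      (Pasc ((m:ℝ)/(q:ℝ)) j * z ^ j / j.factorial) * ((k*x) ^ m / m.factorial)) :=
    fun m => (summable_Pasc _ (ha m) hzabs).mul_right _
  have hinner_hs' : ∀ m : ℕ, HasSum (fun j : ℕ =>
      (Pasc ((m:ℝ)/(q:ℝ)) j * z ^ j / j.factorial) * ((k*x) ^ m / m.factorial))
      ((1 - z) ^ (-((m:ℝ)/(q:ℝ))) * ((k*x) ^ m / m.factorial)) :=
    fun m => (hasSum_binomial _ (ha m) hzabs).mul_right _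
  calc ∑' p : ℕ × ℕ,
        (∏ i ∈ Finset.range p.2, ((p.1:ℝ) + (i:ℝ)*(q:ℝ))) * k ^ (p.1 + p.2*q) * x ^ p.1 /
          ((p.2.factorial:ℝ) * (p.1.factorial:ℝ))
      = ∑' (m : ℕ) (j : ℕ),
          (Pasc ((m:ℝ)/(q:ℝ)) j * z ^ j / j.factorial) * ((k*x) ^ m / m.factorial) := by
        rw [show (fun p : ℕ × ℕ =>
          (∏ i ∈ Finset.range p.2, ((p.1:ℝ) + (i:ℝ)*(q:ℝ))) * k ^ (p.1 + p.2*q) * x ^ p.1 /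
            ((p.2.factorial:ℝ) * (p.1.factorial:ℝ))) = fun p : ℕ × ℕ =>
          (Pasc ((p.1:ℝ)/(q:ℝ)) p.2 * z ^ p.2 / p.2.factorial) *
            ((k*x) ^ p.1 / p.1.factorial) from funext hterm] at part1' ⊢
        exact Summable.tsum_prod' part1' fun m => hinner_sum m
    _ = ∑' m : ℕ, (1 - z) ^ (-((m:ℝ)/(q:ℝ))) * ((k*x) ^ m / m.factorial) := by
        exact tsum_congr fun m => (hinner_hs' m).tsum_eq
    _ = Real.exp (k * x / (1 - z) ^ ((1:ℝ)/(q:ℝ))) := (exp_step q hzabs (k*x)).tsum_eq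
end

section
/- Let κ > 0, let k, q ∈ ℝ³ with k ≠ 0 and κ|q| ≤ 1, and define P : ℝ → ℝ³ by P(μ) = (√(1 − κ²|q|²)/(κ|k|)) · sin(κ|k|μ) · k + cos(κ|k|μ) · q − (sin(κ|k|μ)/|k|) · (k × q). Then for all real μ, 1 − κ²|P(μ)|² = ( √(1 − κ²|q|²) · cos(κ|k|μ) − (κ (k·q)/|k|) · sin(κ|k|μ) )². -/
/-- The standard Euclidean inner product on `ℝ³`. -/
def dot3 (a b : Fin 3 → ℝ) : ℝ := ∑ i, a i * b i

/-- The Euclidean norm on `ℝ³`. -/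
noncomputable def norm3 (a : Fin 3 → ℝ) : ℝ := Real.sqrt (dot3 a a)

/-- The cross product on `ℝ³`. -/
def cross3 (a b : Fin 3 → ℝ) : Fin 3 → ℝ :=
  ![a 1 * b 2 - a 2 * b 1, a 2 * b 0 - a 0 * b 2, a 0 * b 1 - a 1 * b 0]

private lemma expand3 (a c d : ℝ) (k q w : Fin 3 → ℝ) :
    dot3 (a • k + c • q - d • w) (a • k + c • q - d • w) =
      a ^ 2 * dot3 k k + c ^ 2 * dot3 q q + d ^ 2 * dot3 w w +
      2 * (a * c) * dot3 k q - 2 * (a * d) * dot3 k w - 2 * (c * d) * dot3 q w := by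
  simp [dot3, Fin.sum_univ_three]; ring

private lemma cross_orth_left (k q : Fin 3 → ℝ) : dot3 k (cross3 k q) = 0 := by
  simp [dot3, cross3, Fin.sum_univ_three]; ring

private lemma cross_orth_right (k q : Fin 3 → ℝ) : dot3 q (cross3 k q) = 0 := by
  simp [dot3, cross3, Fin.sum_univ_three]; ring

private lemma cross_norm (k q : Fin 3 → ℝ) :
    dot3 (cross3 k q) (cross3 k q) = dot3 k k * dot3 q q - dot3 k q ^ 2 := by
  simp [dot3, cross3, Fin.sum_univ_three]; ring

private lemma scalar_identity (κ S s c kn Q D : ℝ) (hκ : κ ≠ 0) (hkn : kn ≠ 0)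
    (hS2 : S ^ 2 = 1 - κ ^ 2 * Q) (hsc : s ^ 2 + c ^ 2 = 1) :
    1 - κ ^ 2 * ((S / (κ * kn) * s) ^ 2 * kn ^ 2 + c ^ 2 * Q +
      (s / kn) ^ 2 * (kn ^ 2 * Q - D ^ 2) +
      2 * ((S / (κ * kn) * s) * c) * D) =
    (S * c - κ * D / kn * s) ^ 2 := by
  field_simp
  linear_combination (-(kn^2)) * ((S^2 + κ^2*Q) * hsc + hS2)

/-- Let `κ > 0`, `k, q ∈ ℝ³` with `k ≠ 0` and `κ|q| ≤ 1`, and define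
`P(μ) = (√(1 - κ²|q|²)/(κ|k|)) sin(κ|k|μ) k + cos(κ|k|μ) q - (sin(κ|k|μ)/|k|) (k × q)`.
Then for all real `μ`,
`1 - κ²|P(μ)|² = (√(1 - κ²|q|²) cos(κ|k|μ) - (κ(k·q)/|k|) sin(κ|k|μ))²`. -/
theorem statement14 (κ : ℝ) (hκ : 0 < κ) (k q : Fin 3 → ℝ) (hk : k ≠ 0)
    (hq : κ * norm3 q ≤ 1)
    (P : ℝ → Fin 3 → ℝ)
    (hP : ∀ μ : ℝ, P μ =
      (Real.sqrt (1 - κ ^ 2 * dot3 q q) / (κ * norm3 k) *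
        Real.sin (κ * norm3 k * μ)) • k +
      Real.cos (κ * norm3 k * μ) • q -
      (Real.sin (κ * norm3 k * μ) / norm3 k) • cross3 k q)
    (μ : ℝ) :
    1 - κ ^ 2 * dot3 (P μ) (P μ) =
      (Real.sqrt (1 - κ ^ 2 * dot3 q q) * Real.cos (κ * norm3 k * μ) -
        κ * dot3 k q / norm3 k * Real.sin (κ * norm3 k * μ)) ^ 2 := by
  have hdknn : 0 ≤ dot3 k k := by
    simp only [dot3, Fin.sum_univ_three]
    nlinarith [mul_self_nonneg (k 0), mul_self_nonneg (k 1), mul_self_nonneg (k 2)]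
  have hdqnn : 0 ≤ dot3 q q := by
    simp only [dot3, Fin.sum_univ_three]
    nlinarith [mul_self_nonneg (q 0), mul_self_nonneg (q 1), mul_self_nonneg (q 2)]
  have hkn2 : norm3 k ^ 2 = dot3 k k := Real.sq_sqrt hdknn
  have hqn2 : norm3 q ^ 2 = dot3 q q := Real.sq_sqrt hdqnn
  have hkn0 : norm3 k ≠ 0 := by
    intro h
    apply hk
    have h2 : dot3 k k = 0 := by rw [← hkn2, h]; ring
    simp only [dot3, Fin.sum_univ_three] at h2
    have h0 : k 0 = 0 := by
      nlinarith [mul_self_nonneg (k 0), mul_self_nonneg (k 1), mul_self_nonneg (k 2)]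
    have h1 : k 1 = 0 := by
      nlinarith [mul_self_nonneg (k 0), mul_self_nonneg (k 1), mul_self_nonneg (k 2)]
    have h2' : k 2 = 0 := by
      nlinarith [mul_self_nonneg (k 0), mul_self_nonneg (k 1), mul_self_nonneg (k 2)]
    funext i
    fin_cases i <;> simpa
  have hqle : κ ^ 2 * dot3 q q ≤ 1 := by
    have h1 : 0 ≤ κ * norm3 q := mul_nonneg hκ.le (Real.sqrt_nonneg _)
    nlinarith [hqn2]
  have hS2 : Real.sqrt (1 - κ ^ 2 * dot3 q q) ^ 2 = 1 - κ ^ 2 * dot3 q q :=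
    Real.sq_sqrt (by linarith)
  have hsc : Real.sin (κ * norm3 k * μ) ^ 2 + Real.cos (κ * norm3 k * μ) ^ 2 = 1 :=
    Real.sin_sq_add_cos_sq _
  rw [hP μ, expand3, cross_orth_left, cross_orth_right, cross_norm, ← hkn2]
  rw [mul_zero, mul_zero, sub_zero, sub_zero]
  exact scalar_identity κ _ _ _ _ _ _ (ne_of_gt hκ) hkn0 hS2 hsc
end

section
/- Let κ > 0, let k, q ∈ ℝ³ with k ≠ 0 and κ|q| ≤ 1, and define P : ℝ → ℝ³ by P(μ) = (√(1 − κ²|q|²)/(κ|k|)) · sin(κ|k|μ) · k + cos(κ|k|μ) · q − (sin(κ|k|μ)/|k|) · (k × q). Then P(0) = q, and at every μ for which u(μ) := √(1 − κ²|q|²) cos(κ|k|μ) − (κ(k·q)/|k|) sin(κ|k|μ) ≥ 0, the function P satisfies the ODE P'(μ) = √(1 − κ²|P(μ)|²) · k − κ · (k × P(μ)). -/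
set_option maxHeartbeats 1000000 in
/-- Let `κ > 0`, `k, q ∈ ℝ³` with `k ≠ 0` and `κ|q| ≤ 1`, and define
`P(μ) = (√(1 - κ²|q|²)/(κ|k|)) sin(κ|k|μ) k + cos(κ|k|μ) q - (sin(κ|k|μ)/|k|) (k × q)`.
Then `P(0) = q`, and at every `μ` with
`u(μ) := √(1 - κ²|q|²) cos(κ|k|μ) - (κ(k·q)/|k|) sin(κ|k|μ) ≥ 0`, the function `P`
satisfies the ODE `P'(μ) = √(1 - κ²|P(μ)|²) k - κ (k × P(μ))`. -/
theorem statement15 (κ : ℝ) (hκ : 0 < κ) (k q : Fin 3 → ℝ) (hk : k ≠ 0)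
    (hq : κ * norm3 q ≤ 1)
    (P : ℝ → Fin 3 → ℝ)
    (hP : ∀ μ : ℝ, P μ =
      (Real.sqrt (1 - κ ^ 2 * dot3 q q) / (κ * norm3 k) *
        Real.sin (κ * norm3 k * μ)) • k +
      Real.cos (κ * norm3 k * μ) • q -
      (Real.sin (κ * norm3 k * μ) / norm3 k) • cross3 k q) :
    P 0 = q ∧
    ∀ μ : ℝ,
      0 ≤ Real.sqrt (1 - κ ^ 2 * dot3 q q) * Real.cos (κ * norm3 k * μ) -
          κ * dot3 k q / norm3 k * Real.sin (κ * norm3 k * μ) →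
      HasDerivAt P
        (Real.sqrt (1 - κ ^ 2 * dot3 (P μ) (P μ)) • k - κ • cross3 k (P μ)) μ := by
  have hκ' : κ ≠ 0 := ne_of_gt hκ
  -- basic facts about norm3 k
  have hkk_pos : 0 < dot3 k k := by
    rcases Function.ne_iff.mp hk with ⟨i, hi⟩
    have h1 : (0:ℝ) < k i * k i := mul_self_pos.mpr (by simpa using hi)
    have : dot3 k k = ∑ j, k j * k j := rfl
    rw [this]
    have : k i * k i ≤ ∑ j, k j * k j := by
      apply Finset.single_le_sum (f := fun j => k j * k j) (fun j _ => mul_self_nonneg _)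
      simp
    linarith
  have hn_pos : 0 < norm3 k := Real.sqrt_pos.mpr hkk_pos
  have hn' : norm3 k ≠ 0 := ne_of_gt hn_pos
  set n := norm3 k with hn_def
  have hK : n ^ 2 = dot3 k k := Real.sq_sqrt hkk_pos.le
  -- facts about A := sqrt (1 - κ² |q|²)
  have hqq_nonneg : 0 ≤ dot3 q q := Finset.sum_nonneg fun i _ => mul_self_nonneg _
  have hq2 : κ ^ 2 * dot3 q q ≤ 1 := by
    have h0 : 0 ≤ κ * norm3 q := mul_nonneg hκ.le (Real.sqrt_nonneg _)
    have h1 : (κ * norm3 q) ^ 2 ≤ 1 := by nlinarith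
    have h2 : norm3 q ^ 2 = dot3 q q := Real.sq_sqrt hqq_nonneg
    calc κ ^ 2 * dot3 q q = (κ * norm3 q) ^ 2 := by rw [← h2]; ring
    _ ≤ 1 := h1
  set A := Real.sqrt (1 - κ ^ 2 * dot3 q q) with hA_def
  have hA2 : A ^ 2 = 1 - κ ^ 2 * dot3 q q := Real.sq_sqrt (by linarith)
  clear_value n A
  constructor
  · rw [hP 0]
    funext i
    simp
  · intro μ hu
    set s := Real.sin (κ * n * μ) with hs_def
    set c := Real.cos (κ * n * μ) with hc_def
    have hsc : s ^ 2 + c ^ 2 = 1 := Real.sin_sq_add_cos_sq _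
    set D := dot3 k q with hD_def
    set x := cross3 k q with hx_def
    clear_value s c D x
    -- key scalar identity
    have hDot : dot3 (P μ) (P μ) =
        (A * s / (κ * n)) ^ 2 * dot3 k k + c ^ 2 * dot3 q q
          + (s / n) ^ 2 * (dot3 k k * dot3 q q - D ^ 2)
          + 2 * (A * s / (κ * n)) * c * D := by
      rw [hP μ]
      simp only [dot3, cross3, Fin.sum_univ_three, Pi.add_apply, Pi.sub_apply, Pi.smul_apply,
        smul_eq_mul, Matrix.cons_val_zero, Matrix.cons_val_one, Matrix.head_cons,
        Matrix.cons_val_two, Matrix.tail_cons, hx_def, hD_def, ← hn_def, ← hA_def,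
        ← hs_def, ← hc_def]
      ring
    have hmain : 1 - κ ^ 2 * dot3 (P μ) (P μ) = (A * c - κ * D / n * s) ^ 2 := by
      rw [hDot, ← hK]
      field_simp
      linear_combination (-(n^2) * (A^2 + κ^2 * dot3 q q)) * hsc + (-(n^2)) * hA2
    have hsqrt : Real.sqrt (1 - κ ^ 2 * dot3 (P μ) (P μ)) = A * c - κ * D / n * s := by
      rw [hmain, Real.sqrt_sq hu]
    -- the target derivative vector equals the explicit one
    have hW : Real.sqrt (1 - κ ^ 2 * dot3 (P μ) (P μ)) • k - κ • cross3 k (P μ) =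
        fun i => A / (κ * n) * (c * (κ * n)) * k i + -s * (κ * n) * q i
          - c * (κ * n) / n * x i := by
      have hK' : n ^ 2 = k 0 ^ 2 + k 1 ^ 2 + k 2 ^ 2 := by
        rw [hK]; simp [dot3, Fin.sum_univ_three]; ring
      funext i
      rw [hsqrt, hP μ]
      fin_cases i <;>
        simp only [cross3, Pi.sub_apply, Pi.smul_apply, Pi.add_apply, smul_eq_mul,
          Matrix.cons_val_zero, Matrix.cons_val_one, Matrix.head_cons, Matrix.cons_val_two,
          Matrix.tail_cons, hx_def, hD_def, dot3, Fin.sum_univ_three, Fin.reduceFinMk,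
          Fin.isValue, ← hs_def, ← hc_def] <;>
        field_simp
      · linear_combination (κ * s * q 0) * hK'
      · linear_combination (κ * s * q 1) * hK'
      · linear_combination (κ * s * q 2) * hK'
    rw [hW]
    have hPe : P = fun μ => (A / (κ * n) * Real.sin (κ * n * μ)) • k +
        Real.cos (κ * n * μ) • q - (Real.sin (κ * n * μ) / n) • x := by
      funext ν; exact hP ν
    rw [hPe]
    rw [hasDerivAt_pi]
    intro i
    simp only [Pi.add_apply, Pi.sub_apply, Pi.smul_apply, smul_eq_mul]
    have hsin : HasDerivAt (fun ν => Real.sin (κ * n * ν)) (c * (κ * n)) μ := by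
      have := (Real.hasDerivAt_sin (κ * n * μ)).comp μ
        (((hasDerivAt_id μ).const_mul (κ * n)))
      simpa [hc_def, Function.comp_def] using this
    have hcos : HasDerivAt (fun ν => Real.cos (κ * n * ν)) (-s * (κ * n)) μ := by
      have := (Real.hasDerivAt_cos (κ * n * μ)).comp μ
        (((hasDerivAt_id μ).const_mul (κ * n)))
      simpa [hs_def, Function.comp_def] using this
    exact (((hsin.const_mul (A / (κ * n))).mul_const (k i)).add
      (hcos.mul_const (q i))).sub ((hsin.div_const n).mul_const (x i))
end

section
/- Let κ > 0 and define, for k, q ∈ ℝ³ with k ≠ 0, the vector K(k,q) = (√(1 − κ²|q|²)/(κ|k|)) sin(κ|k|) · k + cos(κ|k|) · q − (sin(κ|k|)/|k|) · (k × q), and K₀(k) = K(k,0) = (sin(κ|k|)/(κ|k|)) · k. Then for all k, q ∈ ℝ³ with 0 < κ|k| < 1 and κ|q| ≤ 1, setting k' = (arcsin(κ|k|)/(κ|k|)) · k (so that K₀(k') = k), one has K(k', q) = √(1 − κ²|q|²) · k + √(1 − κ²|k|²) · q − κ · (k × q). (This computes the deformed addition of momenta 𝒟(k,q) = K(K₀^{-1}(k),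 q) for the Freidel–Livine realization of su(2).) -/
/-- `K(k,q) = (√(1 - κ²|q|²)/(κ|k|)) sin(κ|k|) k + cos(κ|k|) q - (sin(κ|k|)/|k|) (k × q)`,
the Freidel–Livine function `K` for `su(2)`. -/
noncomputable def KFL (κ : ℝ) (k q : Fin 3 → ℝ) : Fin 3 → ℝ :=
  (Real.sqrt (1 - κ ^ 2 * dot3 q q) / (κ * norm3 k) * Real.sin (κ * norm3 k)) • k +
    Real.cos (κ * norm3 k) • q - (Real.sin (κ * norm3 k) / norm3 k) • cross3 k q

lemma dot3_smul (c : ℝ) (a : Fin 3 → ℝ) : dot3 (c • a) (c • a) = c ^ 2 * dot3 a a := by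
  simp [dot3, Fin.sum_univ_three]; ring

lemma norm3_smul (c : ℝ) (a : Fin 3 → ℝ) : norm3 (c • a) = |c| * norm3 a := by
  rw [norm3, dot3_smul, norm3, Real.sqrt_mul (sq_nonneg c), Real.sqrt_sq_eq_abs]

lemma cross3_smul (c : ℝ) (a b : Fin 3 → ℝ) : cross3 (c • a) b = c • cross3 a b := by
  funext i
  fin_cases i <;> simp [cross3] <;> ring

lemma cross3_zero (a : Fin 3 → ℝ) : cross3 a 0 = 0 := by
  funext i
  fin_cases i <;> simp [cross3]

lemma dot3_zero : dot3 (0 : Fin 3 → ℝ) 0 = 0 := by simp [dot3]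

lemma dot3_nonneg (a : Fin 3 → ℝ) : 0 ≤ dot3 a a := by
  have : dot3 a a = a 0 * a 0 + a 1 * a 1 + a 2 * a 2 := by
    simp [dot3, Fin.sum_univ_three]
  rw [this]
  nlinarith [sq_nonneg (a 0), sq_nonneg (a 1), sq_nonneg (a 2)]

lemma dot3_self_eq (a : Fin 3 → ℝ) : dot3 a a = norm3 a ^ 2 := by
  rw [norm3, Real.sq_sqrt (dot3_nonneg a)]

/-- For `0 < κ|k| < 1` and `κ|q| ≤ 1`, with
`k' = (arcsin(κ|k|)/(κ|k|)) k`, one has `K₀(k') = K(k',0) = k` and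
`K(k', q) = √(1 - κ²|q|²) k + √(1 - κ²|k|²) q - κ (k × q)`.
This computes the deformed addition of momenta `𝒟(k,q) = K(K₀⁻¹(k), q)` for the
Freidel–Livine realization of `su(2)`. -/
theorem statement16 (κ : ℝ) (hκ : 0 < κ) (k q : Fin 3 → ℝ)
    (hk0 : 0 < κ * norm3 k) (hk1 : κ * norm3 k < 1) (hq : κ * norm3 q ≤ 1) :
    KFL κ ((Real.arcsin (κ * norm3 k) / (κ * norm3 k)) • k) 0 = k ∧
    KFL κ ((Real.arcsin (κ * norm3 k) / (κ * norm3 k)) • k) q =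
      Real.sqrt (1 - κ ^ 2 * dot3 q q) • k +
      Real.sqrt (1 - κ ^ 2 * dot3 k k) • q - κ • cross3 k q := by
  set x := κ * norm3 k with hx
  set θ := Real.arcsin x with hθ
  have hr : 0 < norm3 k := by
    rcases (lt_or_ge 0 (norm3 k)) with h | h
    · exact h
    · nlinarith
  have hθ0 : 0 < θ := Real.arcsin_pos.mpr hk0
  have hsin : Real.sin θ = x := Real.sin_arcsin (by linarith) (le_of_lt hk1)
  have hcos : Real.cos θ = Real.sqrt (1 - x ^ 2) := by
    rw [hθ, Real.cos_arcsin]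
  set a := θ / x with ha
  have ha0 : 0 < a := div_pos hθ0 hk0
  have hnorm : norm3 (a • k) = a * norm3 k := by
    rw [norm3_smul, abs_of_pos ha0]
  have hκn : κ * norm3 (a • k) = θ := by
    rw [hnorm, ha]
    field_simp [hx]
    ring
  have hxk : κ ^ 2 * dot3 k k = x ^ 2 := by
    rw [dot3_self_eq, hx]; ring
  have hx0 : x ≠ 0 := ne_of_gt hk0
  have hθne : θ ≠ 0 := ne_of_gt hθ0
  constructor
  · rw [KFL, hκn, hsin, dot3_zero, cross3_zero]
    simp only [smul_zero, add_zero, sub_zero, smul_smul]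
    have hc : Real.sqrt (1 - κ ^ 2 * 0) / θ * x * a = 1 := by
      rw [mul_zero, sub_zero, Real.sqrt_one, ha]
      field_simp
    rw [hc, one_smul]
  · rw [KFL, hκn, hnorm, hsin, hcos, cross3_smul, smul_smul, smul_smul, hxk]
    congr 1
    · congr 1
      rw [ha, hx]
      field_simp
    · congr 1
      rw [ha, hx]
      field_simp
end
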